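/- arXiv:2605.20151 — 5 statements merged into one kernel-verified Lean document; each statement's English description precedes it below -/
import Mathlib

section
/- For every pair of integers t ≥ s ≥ 0 and every pair of nodes ν_1, ν_2 ∈ M, with probability at least 1 − δ · ∑_{j=1}^{t−s} N_max^j, the corresponding block of the product of the random block matrices is close to the block of the product of the deterministic ones: ‖Ω*_{t,s+1,ν_1,ν_2} − Ω_{t,s+1,ν_1,ν_2}‖_op ≤ γ_1 · ∑_{j=1}^{t−s} N_max^j. -/
open MeasureTheory ProbabilityTheory Matrix Finset

noncomputable section

/-- The ℓ²-operator norm of a real matrix. -/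
def opNorm {m n : ℕ} (A : Matrix (Fin m) (Fin n) ℝ) : ℝ :=
  ‖(Matrix.toEuclideanLin A).toContinuousLinearMap‖

/-- In-neighbourhood of `μ` in the directed graph with edge set `E`. -/
def Nin {K : ℕ} (E : Finset (Fin K × Fin K)) (μ : Fin K) : Finset (Fin K) :=
  Finset.univ.filter (fun ν => (ν, μ) ∈ E)

/-- The set of learning models (those with at least one incoming edge). -/
def Ml {K : ℕ} (E : Finset (Fin K × Fin K)) : Finset (Fin K) :=
  Finset.univ.filter (fun μ => Nin E μ ≠ ∅)

/-- The set of models with no incoming edge (stable data sources). -/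
def Mu {K : ℕ} (E : Finset (Fin K × Fin K)) : Finset (Fin K) :=
  Finset.univ.filter (fun μ => Nin E μ = ∅)

/-- `N_max = max_{μ∈M} |Nin(μ)|`. -/
def Nmax {K : ℕ} (E : Finset (Fin K × Fin K)) : ℕ :=
  Finset.univ.sup (fun μ : Fin K => (Nin E μ).card)

/-- A `dK×dK` block matrix built from `d×d` blocks. -/
def ofBlocks {K d : ℕ} (B : Fin K → Fin K → Matrix (Fin d) (Fin d) ℝ) :
    Matrix (Fin K × Fin d) (Fin K × Fin d) ℝ :=
  Matrix.of fun p r => B p.1 r.1 p.2 r.2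

/-- The `(i,j)` d×d block of a `dK×dK` matrix. -/
def blockOf {K d : ℕ} (A : Matrix (Fin K × Fin d) (Fin K × Fin d) ℝ) (i j : Fin K) :
    Matrix (Fin d) (Fin d) ℝ :=
  Matrix.of fun a b => A (i, a) (j, b)

/-- The ordered product `Ω_{t,s} = T_t T_{t−1} ⋯ T_s` (equal to `I` when `s = t + 1`). -/
def Omega {K d : ℕ} (T : ℕ → Matrix (Fin K × Fin d) (Fin K × Fin d) ℝ) (t s : ℕ) :
    Matrix (Fin K × Fin d) (Fin K × Fin d) ℝ :=
  ((List.range' s (t + 1 - s)).reverse.map T).prod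

/-- The deterministic blocks `T*_{t,μ,ν}`: `p_{t,ν→μ}·I_d` for `μ ∈ M_l`, `ν ∈ Nin(μ)`;
`I_d` for `μ = ν ∈ M_u`; `0` otherwise. -/
def Tstar {K d : ℕ} (E : Finset (Fin K × Fin K)) (p : ℕ → Fin K → Fin K → ℝ) (t : ℕ)
    (μ ν : Fin K) : Matrix (Fin d) (Fin d) ℝ :=
  if μ ∈ Ml E then (if ν ∈ Nin E μ then p t ν μ • (1 : Matrix (Fin d) (Fin d) ℝ) else 0)
  else (if μ = ν then 1 else 0)

end


open scoped Matrix.Norms.L2Operator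
lemma opNorm_eq {m n : ℕ} (A : Matrix (Fin m) (Fin n) ℝ) : opNorm A = ‖A‖ := rfl
lemma opNorm_one_le {d : ℕ} (hd : 1 ≤ d) : opNorm (1 : Matrix (Fin d) (Fin d) ℝ) ≤ 1 := by
  rw [opNorm_eq]
  haveI : Nontrivial (Matrix (Fin d) (Fin d) ℝ) := by
    refine ⟨1, 0, fun h => ?_⟩
    have := congrFun (congrFun h ⟨0, hd⟩) ⟨0, hd⟩
    simp [Matrix.one_apply] at this
  rw [CStarRing.norm_one]
lemma opNorm_mul_le {d : ℕ} (A B : Matrix (Fin d) (Fin d) ℝ) :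
    opNorm (A * B) ≤ opNorm A * opNorm B := Matrix.l2_opNorm_mul A B
lemma opNorm_smul {d : ℕ} (c : ℝ) (A : Matrix (Fin d) (Fin d) ℝ) :
    opNorm (c • A) = |c| * opNorm A := by
  rw [opNorm_eq, opNorm_eq, norm_smul, Real.norm_eq_abs]
lemma opNorm_nonneg {m n : ℕ} (A : Matrix (Fin m) (Fin n) ℝ) : 0 ≤ opNorm A := norm_nonneg _
lemma opNorm_zero {m n : ℕ} : opNorm (0 : Matrix (Fin m) (Fin n) ℝ) = 0 := by
  rw [opNorm_eq]; exact norm_zero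
lemma opNorm_neg {m n : ℕ} (A : Matrix (Fin m) (Fin n) ℝ) : opNorm (-A) = opNorm A := by
  rw [opNorm_eq, opNorm_eq]; exact norm_neg _
lemma opNorm_sum_le {d : ℕ} {ι : Type*} (s : Finset ι) (f : ι → Matrix (Fin d) (Fin d) ℝ) :
    opNorm (∑ i ∈ s, f i) ≤ ∑ i ∈ s, opNorm (f i) := by
  rw [opNorm_eq]
  refine (norm_sum_le s f).trans (le_of_eq ?_)
  rfl
lemma opNorm_add_le {d : ℕ} (A B : Matrix (Fin d) (Fin d) ℝ) :
    opNorm (A + B) ≤ opNorm A + opNorm B := by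
  rw [opNorm_eq, opNorm_eq, opNorm_eq]; exact norm_add_le _ _

lemma not_mem_Ml {K : ℕ} {E : Finset (Fin K × Fin K)} {μ : Fin K} (h : μ ∉ Ml E) : μ ∈ Mu E := by
  simp only [Ml, Mu, Finset.mem_filter, Finset.mem_univ, true_and, not_not] at *
  exact h
lemma Ml_Mu_disjoint {K : ℕ} {E : Finset (Fin K × Fin K)} {μ : Fin K} (h : μ ∈ Ml E) :
    μ ∉ Mu E := by
  simp only [Ml, Mu, Finset.mem_filter, Finset.mem_univ, true_and] at *
  exact h
lemma card_Nin_le {K : ℕ} (E : Finset (Fin K × Fin K)) (μ : Fin K) :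
    (Nin E μ).card ≤ Nmax E := Finset.le_sup (f := fun μ : Fin K => (Nin E μ).card) (Finset.mem_univ μ)

/-- row sums of norms of the deterministic blocks are at most 1. -/
lemma Tstar_row_sum {K d : ℕ} (hd : 1 ≤ d) (E : Finset (Fin K × Fin K))
    (p : ℕ → Fin K → Fin K → ℝ) (r : ℕ) (hr : 1 ≤ r)
    (hpnn : ∀ t, 1 ≤ t → ∀ ν μ : Fin K, 0 ≤ p t ν μ)
    (hprow : ∀ t, 1 ≤ t → ∀ μ ∈ Ml E, ∑ ν ∈ Nin E μ, p t ν μ = 1) (μ : Fin K) :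
    ∑ ν, opNorm (Tstar E p r μ ν (d := d)) ≤ 1 := by
  by_cases h : μ ∈ Ml E
  · have : ∀ ν, opNorm (Tstar E p r μ ν (d := d)) =
        if ν ∈ Nin E μ then opNorm (p r ν μ • (1 : Matrix (Fin d) (Fin d) ℝ)) else 0 := by
      intro ν
      by_cases hν : ν ∈ Nin E μ <;> simp [Tstar, h, hν, opNorm_zero]
    rw [Finset.sum_congr rfl fun ν _ => this ν, Finset.sum_ite_mem, Finset.univ_inter]
    calc ∑ ν ∈ Nin E μ, opNorm (p r ν μ • (1 : Matrix (Fin d) (Fin d) ℝ))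
        ≤ ∑ ν ∈ Nin E μ, p r ν μ := by
          refine Finset.sum_le_sum fun ν _ => ?_
          rw [opNorm_smul, abs_of_nonneg (hpnn r hr ν μ)]
          calc p r ν μ * opNorm (1 : Matrix (Fin d) (Fin d) ℝ) ≤ p r ν μ * 1 :=
            mul_le_mul_of_nonneg_left (opNorm_one_le hd) (hpnn r hr ν μ)
          _ = p r ν μ := mul_one _
      _ = 1 := hprow r hr μ h
  · have : ∀ ν, opNorm (Tstar E p r μ ν (d := d)) =
        if μ = ν then opNorm (1 : Matrix (Fin d) (Fin d) ℝ) else 0 := by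
      intro ν
      by_cases hν : μ = ν
      · subst hν; simp [Tstar, h]
      · simp [Tstar, h, hν, opNorm_zero]
    rw [Finset.sum_congr rfl fun ν _ => this ν, Finset.sum_ite_eq, if_pos (Finset.mem_univ μ)]
    exact opNorm_one_le hd

lemma blockOf_mul {K d : ℕ} (A B : Matrix (Fin K × Fin d) (Fin K × Fin d) ℝ) (i j : Fin K) :
    blockOf (A * B) i j = ∑ k, blockOf A i k * blockOf B k j := by
  ext a b
  simp only [blockOf, Matrix.of_apply, Matrix.mul_apply, Finset.sum_apply, Matrix.sum_apply]
  rw [← Finset.sum_product']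
  exact Finset.sum_nbij' (fun x => (x.1, x.2)) (fun x => (x.1, x.2)) (by simp) (by simp)
    (by simp) (by simp) (by simp)
lemma blockOf_ofBlocks {K d : ℕ} (B : Fin K → Fin K → Matrix (Fin d) (Fin d) ℝ) (i j : Fin K) :
    blockOf (ofBlocks B) i j = B i j := rfl
lemma blockOf_one {K d : ℕ} (i j : Fin K) :
    blockOf (1 : Matrix (Fin K × Fin d) (Fin K × Fin d) ℝ) i j =
      if i = j then 1 else 0 := by
  ext a b
  by_cases h : i = j <;> simp [blockOf, Matrix.one_apply, Prod.ext_iff, h]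
lemma Omega_self {K d : ℕ} (T : ℕ → Matrix (Fin K × Fin d) (Fin K × Fin d) ℝ) (s : ℕ) :
    Omega T s (s + 1) = 1 := by
  simp [Omega]
lemma Omega_succ {K d : ℕ} (T : ℕ → Matrix (Fin K × Fin d) (Fin K × Fin d) ℝ) (s m : ℕ) :
    Omega T (s + m + 1) (s + 1) = T (s + m + 1) * Omega T (s + m) (s + 1) := by
  have h1 : s + m + 1 + 1 - (s + 1) = m + 1 := by omega
  have h2 : s + m + 1 - (s + 1) = m := by omega
  have h3 : s + 1 + 1 * m = s + m + 1 := by omega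
  rw [Omega, Omega, h1, h2, List.range'_concat, List.reverse_append, List.map_append,
    List.prod_append, h3]
  simp

/-- iterated products of the deterministic matrices have all blocks of norm ≤ 1. -/
lemma OmegaStar_block_le {K d : ℕ} (hd : 1 ≤ d) (E : Finset (Fin K × Fin K))
    (p : ℕ → Fin K → Fin K → ℝ)
    (hpnn : ∀ t, 1 ≤ t → ∀ ν μ : Fin K, 0 ≤ p t ν μ)
    (hprow : ∀ t, 1 ≤ t → ∀ μ ∈ Ml E, ∑ ν ∈ Nin E μ, p t ν μ = 1) :
    ∀ m s : ℕ, ∀ ν ν₂ : Fin K,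
      opNorm (blockOf (Omega (fun r => ofBlocks (Tstar E p r (d := d))) (s + m) (s + 1)) ν ν₂) ≤ 1 := by
  intro m
  induction m with
  | zero =>
    intro s ν ν₂
    rw [Nat.add_zero, Omega_self, blockOf_one]
    by_cases h : ν = ν₂
    · rw [if_pos h]; exact opNorm_one_le hd
    · rw [if_neg h, opNorm_zero]; exact zero_le_one
  | succ m ih =>
    intro s ν ν₂
    rw [show s + (m + 1) = s + m + 1 from rfl, Omega_succ, blockOf_mul]
    calc opNorm (∑ k, blockOf (ofBlocks (Tstar E p (s + m + 1) (d := d))) ν k *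
            blockOf (Omega (fun r => ofBlocks (Tstar E p r (d := d))) (s + m) (s + 1)) k ν₂)
        ≤ ∑ k, opNorm (blockOf (ofBlocks (Tstar E p (s + m + 1) (d := d))) ν k *
            blockOf (Omega (fun r => ofBlocks (Tstar E p r (d := d))) (s + m) (s + 1)) k ν₂) :=
          opNorm_sum_le _ _
      _ ≤ ∑ k, opNorm (Tstar E p (s + m + 1) ν k (d := d)) := by
          refine Finset.sum_le_sum fun k _ => ?_
          rw [blockOf_ofBlocks]
          calc opNorm (Tstar E p (s + m + 1) ν k (d := d) *
                  blockOf (Omega (fun r => ofBlocks (Tstar E p r (d := d))) (s + m) (s + 1)) k ν₂)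
              ≤ opNorm (Tstar E p (s + m + 1) ν k) *
                  opNorm (blockOf (Omega (fun r => ofBlocks (Tstar E p r (d := d))) (s + m) (s + 1)) k ν₂) :=
                opNorm_mul_le _ _
            _ ≤ opNorm (Tstar E p (s + m + 1) ν k) * 1 :=
                mul_le_mul_of_nonneg_left (ih s k ν₂) (opNorm_nonneg _)
            _ = _ := mul_one _
      _ ≤ 1 := Tstar_row_sum hd E p (s + m + 1) (by omega) hpnn hprow ν

/-- generic one-step perturbation bound. -/
lemma sum_diff_bound {K d : ℕ} (Z : Finset (Fin K)) (U V A' A : Fin K → Matrix (Fin d) (Fin d) ℝ)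
    (e f : Fin K → ℝ)
    (hzero : ∀ ν ∉ Z, U ν = 0 ∧ V ν = 0)
    (hUV : ∀ ν ∈ Z, opNorm (U ν - V ν) ≤ e ν)
    (hV : ∀ ν ∈ Z, opNorm (V ν) ≤ 1)
    (hA' : ∀ ν ∈ Z, opNorm (A' ν) ≤ 1)
    (hAA : ∀ ν ∈ Z, opNorm (A' ν - A ν) ≤ f ν)
    (he : ∀ ν ∈ Z, 0 ≤ e ν) :
    opNorm (∑ ν, (U ν * A' ν - V ν * A ν)) ≤ ∑ ν ∈ Z, (e ν + f ν) := by
  have hsub : ∀ ν, ν ∉ Z → U ν * A' ν - V ν * A ν = 0 := by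
    intro ν hν
    rw [(hzero ν hν).1, (hzero ν hν).2, Matrix.zero_mul, Matrix.zero_mul, sub_zero]
  rw [← Finset.sum_subset (Finset.subset_univ Z) (fun ν _ hν => hsub ν hν)]
  refine (opNorm_sum_le _ _).trans (Finset.sum_le_sum fun ν hν => ?_)
  have key : U ν * A' ν - V ν * A ν = (U ν - V ν) * A' ν + V ν * (A' ν - A ν) := by
    noncomm_ring
  rw [key]
  calc opNorm ((U ν - V ν) * A' ν + V ν * (A' ν - A ν))
      ≤ opNorm ((U ν - V ν) * A' ν) + opNorm (V ν * (A' ν - A ν)) := opNorm_add_le _ _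
    _ ≤ opNorm (U ν - V ν) * opNorm (A' ν) + opNorm (V ν) * opNorm (A' ν - A ν) :=
        add_le_add (opNorm_mul_le _ _) (opNorm_mul_le _ _)
    _ ≤ e ν * 1 + 1 * f ν := by
        refine add_le_add (mul_le_mul (hUV ν hν) (hA' ν hν) (opNorm_nonneg _) (he ν hν)) ?_
        exact mul_le_mul (hV ν hν) (hAA ν hν) (opNorm_nonneg _) zero_le_one
    _ = e ν + f ν := by ring

/-- geometric sum recursion. -/
lemma Sgeo_succ (N : ℝ) (m : ℕ) :
    ∑ j ∈ Finset.range (m + 1), N ^ (j + 1) = N * (1 + ∑ j ∈ Finset.range m, N ^ (j + 1)) := by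
  rw [Finset.sum_range_succ', mul_add, mul_one, Finset.mul_sum]
  have h1 : ∀ j : ℕ, N ^ (j + 1 + 1) = N * N ^ (j + 1) := fun j => by ring
  rw [Finset.sum_congr rfl fun j _ => h1 j]
  ring

lemma card_mul_ofReal (c : ℕ) (x : ℝ) :
    (c : ENNReal) * ENNReal.ofReal x = ENNReal.ofReal (c * x) := by
  rw [ENNReal.ofReal_mul (Nat.cast_nonneg c), ENNReal.ofReal_natCast]

set_option maxHeartbeats 1600000 in
/-- Concentration of products of random block matrices around the products of
their deterministic counterparts: for all `t ≥ s ≥ 0` and `ν₁, ν₂ ∈ M`, with probability at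
least `1 − δ·∑_{j=1}^{t−s} N_max^j`,
`‖Ω*_{t,s+1,ν₁,ν₂} − Ω_{t,s+1,ν₁,ν₂}‖_op ≤ γ₁·∑_{j=1}^{t−s} N_max^j`. -/
theorem stmt7
    {K d : ℕ} (hK : 1 ≤ K) (hd : 1 ≤ d)
    (E : Finset (Fin K × Fin K))
    {Ω : Type*} [MeasurableSpace Ω] (P : Measure Ω) [IsProbabilityMeasure P]
    (T : ℕ → Fin K → Fin K → Ω → Matrix (Fin d) (Fin d) ℝ)
    (p : ℕ → Fin K → Fin K → ℝ)
    (hpnn : ∀ t, 1 ≤ t → ∀ ν μ : Fin K, 0 ≤ p t ν μ)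
    (hprow : ∀ t, 1 ≤ t → ∀ μ ∈ Ml E, ∑ ν ∈ Nin E μ, p t ν μ = 1)
    (hTzero : ∀ t, 1 ≤ t → ∀ μ ν : Fin K,
      ¬ ((μ ∈ Ml E ∧ ν ∈ Nin E μ) ∨ (μ = ν ∧ μ ∈ Mu E)) → ∀ᵐ ω ∂P, T t μ ν ω = 0)
    (hTu : ∀ t, 1 ≤ t → ∀ μ ∈ Mu E, ∀ᵐ ω ∂P, T t μ μ ω = 1)
    (hTbd : ∀ t, 1 ≤ t → ∀ μ ν : Fin K, ∀ᵐ ω ∂P, opNorm (T t μ ν ω) ≤ 1)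
    (γ₁ δ : ℝ) (hγ₁0 : 0 < γ₁) (hγ₁1 : γ₁ < 1) (hδ0 : 0 < δ) (hδ1 : δ < 1)
    (hconc : ∀ t, 1 ≤ t → ∀ μ ∈ Ml E, ∀ ν ∈ Nin E μ,
      P {ω | γ₁ ≤ opNorm (T t μ ν ω - p t ν μ • (1 : Matrix (Fin d) (Fin d) ℝ))} ≤
        ENNReal.ofReal δ) :
    ∀ t s : ℕ, s ≤ t → ∀ ν₁ ν₂ : Fin K,
      ENNReal.ofReal (1 - δ * ∑ j ∈ Finset.Icc 1 (t - s), (Nmax E : ℝ) ^ j) ≤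
        P {ω |
          opNorm (blockOf (Omega (fun r => ofBlocks (Tstar E p r)) t (s + 1)) ν₁ ν₂ -
              blockOf (Omega (fun r => ofBlocks (fun μ ν => T r μ ν ω)) t (s + 1)) ν₁ ν₂) ≤
            γ₁ * ∑ j ∈ Finset.Icc 1 (t - s), (Nmax E : ℝ) ^ j} := by
  intro t s hst ν₁ ν₂
  obtain ⟨m, rfl⟩ : ∃ m, t = s + m := ⟨t - s, by omega⟩
  have hms : s + m - s = m := by omega
  rw [hms]
  have hsum : ∑ j ∈ Finset.Icc 1 m, (Nmax E : ℝ) ^ j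
      = ∑ j ∈ Finset.range m, (Nmax E : ℝ) ^ (j + 1) := by
    rw [← Finset.Ico_add_one_right_eq_Icc, Finset.sum_Ico_eq_sum_range, Nat.add_sub_cancel]
    exact Finset.sum_congr rfl fun j _ => by rw [add_comm]
  rw [hsum]
  set N : ℝ := (Nmax E : ℝ) with hN
  set S : ℕ → ℝ := fun k => ∑ j ∈ Finset.range k, N ^ (j + 1) with hSdef
  have hS0 : ∀ k, 0 ≤ S k := fun k => Finset.sum_nonneg fun j _ =>
    pow_nonneg (Nat.cast_nonneg _) _
  have hSrec : ∀ k, S (k + 1) = N * (1 + S k) := fun k => Sgeo_succ N k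
  have hSmono : ∀ k, S k ≤ S (k + 1) := by
    intro k
    simp only [hSdef]
    rw [Finset.sum_range_succ]
    have : (0:ℝ) ≤ N ^ (k + 1) := pow_nonneg (Nat.cast_nonneg _) _
    linarith
  have key : ∀ (m : ℕ) (ν₁ ν₂ : Fin K),
      P {ω | ¬ (opNorm (blockOf (Omega (fun r => ofBlocks (Tstar E p r)) (s + m) (s + 1)) ν₁ ν₂ -
          blockOf (Omega (fun r => ofBlocks (fun μ ν => T r μ ν ω)) (s + m) (s + 1)) ν₁ ν₂) ≤
        γ₁ * S m)} ≤ ENNReal.ofReal (δ * S m) := by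
    intro m
    induction m with
    | zero =>
      intro ν₁ ν₂
      have hempty : {ω | ¬ (opNorm
          (blockOf (Omega (fun r => ofBlocks (Tstar E p r)) (s + 0) (s + 1)) ν₁ ν₂ -
           blockOf (Omega (fun r => ofBlocks (fun μ ν => T r μ ν ω)) (s + 0) (s + 1)) ν₁ ν₂) ≤
          γ₁ * S 0)} = (∅ : Set Ω) := by
        ext ω
        simp only [Set.mem_setOf_eq, Set.mem_empty_iff_false, iff_false, not_not]
        rw [Nat.add_zero, Omega_self, Omega_self, sub_self, opNorm_zero]
        simp [hSdef]
      rw [hempty, measure_empty]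
      exact zero_le
    | succ m ih =>
      intro ν₁ ν₂
      have hr1 : 1 ≤ s + m + 1 := by omega
      -- the a.s. regularity event at time s+m+1
      have hae : ∀ᵐ ω ∂P, (∀ μ ν : Fin K, opNorm (T (s + m + 1) μ ν ω) ≤ 1) ∧
          (∀ μ ν : Fin K, ¬ ((μ ∈ Ml E ∧ ν ∈ Nin E μ) ∨ (μ = ν ∧ μ ∈ Mu E)) →
            T (s + m + 1) μ ν ω = 0) ∧
          (∀ μ ∈ Mu E, T (s + m + 1) μ μ ω = 1) := by
        refine Filter.Eventually.and (ae_all_iff.2 fun μ => ae_all_iff.2 fun ν =>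
            hTbd _ hr1 μ ν) (Filter.Eventually.and ?_ ?_)
        · refine ae_all_iff.2 fun μ => ae_all_iff.2 fun ν => ?_
          by_cases hc : (μ ∈ Ml E ∧ ν ∈ Nin E μ) ∨ (μ = ν ∧ μ ∈ Mu E)
          · exact Filter.Eventually.of_forall fun ω h => absurd hc h
          · exact (hTzero _ hr1 μ ν hc).mono fun ω h _ => h
        · refine ae_all_iff.2 fun μ => ?_
          by_cases hμ : μ ∈ Mu E
          · exact (hTu _ hr1 μ hμ).mono fun ω h _ => h
          · exact Filter.Eventually.of_forall fun ω h => absurd h hμ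
      set C : Set Ω := {ω | ¬ ((∀ μ ν : Fin K, opNorm (T (s + m + 1) μ ν ω) ≤ 1) ∧
          (∀ μ ν : Fin K, ¬ ((μ ∈ Ml E ∧ ν ∈ Nin E μ) ∨ (μ = ν ∧ μ ∈ Mu E)) →
            T (s + m + 1) μ ν ω = 0) ∧
          (∀ μ ∈ Mu E, T (s + m + 1) μ μ ω = 1))} with hCdef
      have hC0 : P C = 0 := ae_iff.1 hae
      by_cases hMl : ν₁ ∈ Ml E
      · -- learning node
        set BadA : Set Ω := ⋃ ν ∈ Nin E ν₁,
          {ω | γ₁ ≤ opNorm (T (s + m + 1) ν₁ ν ω -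
            p (s + m + 1) ν ν₁ • (1 : Matrix (Fin d) (Fin d) ℝ))} with hBadA
        set BadB : Set Ω := ⋃ ν ∈ Nin E ν₁,
          {ω | ¬ (opNorm (blockOf (Omega (fun r => ofBlocks (Tstar E p r)) (s + m) (s + 1)) ν ν₂ -
            blockOf (Omega (fun r => ofBlocks (fun μ ν' => T r μ ν' ω)) (s + m) (s + 1)) ν ν₂) ≤
            γ₁ * S m)} with hBadB
        have hsubset : {ω | ¬ (opNorm
            (blockOf (Omega (fun r => ofBlocks (Tstar E p r)) (s + (m+1)) (s + 1)) ν₁ ν₂ -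
             blockOf (Omega (fun r => ofBlocks (fun μ ν => T r μ ν ω)) (s + (m+1)) (s + 1)) ν₁ ν₂) ≤
            γ₁ * S (m+1))} ⊆ BadA ∪ BadB ∪ C := by
          intro ω hω
          by_contra hcon
          obtain ⟨hAB, hC⟩ := not_or.1 hcon
          obtain ⟨hA', hB'⟩ := not_or.1 hAB
          have hCC : (∀ μ ν : Fin K, opNorm (T (s + m + 1) μ ν ω) ≤ 1) ∧
              (∀ μ ν : Fin K, ¬ ((μ ∈ Ml E ∧ ν ∈ Nin E μ) ∨ (μ = ν ∧ μ ∈ Mu E)) →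
                T (s + m + 1) μ ν ω = 0) ∧
              (∀ μ ∈ Mu E, T (s + m + 1) μ μ ω = 1) := not_not.1 hC
          obtain ⟨hbd, hzero, hone⟩ := hCC
          have hA : ∀ ν ∈ Nin E ν₁, opNorm (T (s + m + 1) ν₁ ν ω -
              p (s + m + 1) ν ν₁ • (1 : Matrix (Fin d) (Fin d) ℝ)) < γ₁ := by
            intro ν hν
            by_contra hge
            exact hA' (Set.mem_iUnion₂.2 ⟨ν, hν, not_lt.1 hge⟩)
          have hB : ∀ ν ∈ Nin E ν₁,
              opNorm (blockOf (Omega (fun r => ofBlocks (Tstar E p r)) (s + m) (s + 1)) ν ν₂ -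
                blockOf (Omega (fun r => ofBlocks (fun μ ν' => T r μ ν' ω)) (s + m) (s + 1)) ν ν₂) ≤
              γ₁ * S m := by
            intro ν hν
            by_contra hgt
            exact hB' (Set.mem_iUnion₂.2 ⟨ν, hν, hgt⟩)
          apply hω
          have hrec : blockOf (Omega (fun r => ofBlocks (Tstar E p r)) (s + (m+1)) (s + 1)) ν₁ ν₂ -
              blockOf (Omega (fun r => ofBlocks (fun μ ν => T r μ ν ω)) (s + (m+1)) (s + 1)) ν₁ ν₂
              = ∑ ν, (Tstar E p (s + m + 1) ν₁ ν *
                  blockOf (Omega (fun r => ofBlocks (Tstar E p r)) (s + m) (s + 1)) ν ν₂ -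
                T (s + m + 1) ν₁ ν ω *
                  blockOf (Omega (fun r => ofBlocks (fun μ ν' => T r μ ν' ω)) (s + m) (s + 1)) ν ν₂) := by
            rw [show s + (m + 1) = s + m + 1 from rfl, Omega_succ, Omega_succ,
              blockOf_mul, blockOf_mul, ← Finset.sum_sub_distrib]
            exact Finset.sum_congr rfl fun ν _ => by rw [blockOf_ofBlocks, blockOf_ofBlocks]
          have hz : ∀ ν ∉ Nin E ν₁, Tstar E p (s + m + 1) ν₁ ν (d := d) = 0 ∧
              T (s + m + 1) ν₁ ν ω = 0 := by
            intro ν hν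
            refine ⟨by simp [Tstar, hMl, hν], hzero ν₁ ν ?_⟩
            rintro (⟨_, hmem⟩ | ⟨rfl, hmu⟩)
            · exact hν hmem
            · exact Ml_Mu_disjoint hMl hmu
          have hUV : ∀ ν ∈ Nin E ν₁,
              opNorm (Tstar E p (s + m + 1) ν₁ ν (d := d) - T (s + m + 1) ν₁ ν ω) ≤ γ₁ := by
            intro ν hν
            have h1 : Tstar E p (s + m + 1) ν₁ ν (d := d) =
                p (s + m + 1) ν ν₁ • (1 : Matrix (Fin d) (Fin d) ℝ) := by
              simp [Tstar, hMl, hν]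
            have h2 : Tstar E p (s + m + 1) ν₁ ν (d := d) - T (s + m + 1) ν₁ ν ω =
                -(T (s + m + 1) ν₁ ν ω - p (s + m + 1) ν ν₁ • (1 : Matrix (Fin d) (Fin d) ℝ)) := by
              rw [h1]; exact (neg_sub _ _).symm
            rw [h2, opNorm_neg]
            exact le_of_lt (hA ν hν)
          have hbound := sum_diff_bound (Nin E ν₁)
            (fun ν => Tstar E p (s + m + 1) ν₁ ν)
            (fun ν => T (s + m + 1) ν₁ ν ω)
            (fun ν => blockOf (Omega (fun r => ofBlocks (Tstar E p r)) (s + m) (s + 1)) ν ν₂)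
            (fun ν => blockOf (Omega (fun r => ofBlocks (fun μ ν' => T r μ ν' ω)) (s + m) (s + 1)) ν ν₂)
            (fun _ => γ₁) (fun _ => γ₁ * S m)
            hz hUV (fun ν _ => hbd ν₁ ν)
            (fun ν _ => OmegaStar_block_le hd E p hpnn hprow m s ν ν₂)
            hB (fun ν _ => le_of_lt hγ₁0)
          rw [hrec]
          refine hbound.trans ?_
          rw [Finset.sum_const, nsmul_eq_mul]
          have hcard : ((Nin E ν₁).card : ℝ) ≤ N := by
            rw [hN]
            exact_mod_cast card_Nin_le E ν₁
          have hfac : (0:ℝ) ≤ γ₁ + γ₁ * S m := by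
            have h2 := mul_nonneg hγ₁0.le (hS0 m)
            linarith
          calc ((Nin E ν₁).card : ℝ) * (γ₁ + γ₁ * S m) ≤ N * (γ₁ + γ₁ * S m) :=
              mul_le_mul_of_nonneg_right hcard hfac
            _ = γ₁ * (N * (1 + S m)) := by ring
            _ = γ₁ * S (m + 1) := by rw [hSrec m]
        refine (measure_mono hsubset).trans ?_
        have hPA : P BadA ≤ ((Nin E ν₁).card : ENNReal) * ENNReal.ofReal δ := by
          refine (measure_biUnion_finset_le _ _).trans ?_
          rw [← nsmul_eq_mul, ← Finset.sum_const]
          exact Finset.sum_le_sum fun ν hν => hconc _ hr1 ν₁ hMl ν hν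
        have hPB : P BadB ≤ ((Nin E ν₁).card : ENNReal) * ENNReal.ofReal (δ * S m) := by
          refine (measure_biUnion_finset_le _ _).trans ?_
          rw [← nsmul_eq_mul, ← Finset.sum_const]
          exact Finset.sum_le_sum fun ν hν => ih ν ν₂
        calc P (BadA ∪ BadB ∪ C) ≤ P (BadA ∪ BadB) + P C := measure_union_le _ _
          _ ≤ P BadA + P BadB + 0 := by rw [hC0]; exact add_le_add_left (measure_union_le _ _) 0
          _ = P BadA + P BadB := by rw [add_zero]
          _ ≤ ((Nin E ν₁).card : ENNReal) * ENNReal.ofReal δ +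
              ((Nin E ν₁).card : ENNReal) * ENNReal.ofReal (δ * S m) := add_le_add hPA hPB
          _ = ENNReal.ofReal ((Nin E ν₁).card * δ) +
              ENNReal.ofReal ((Nin E ν₁).card * (δ * S m)) := by
              rw [card_mul_ofReal, card_mul_ofReal]
          _ = ENNReal.ofReal ((Nin E ν₁).card * δ + (Nin E ν₁).card * (δ * S m)) := by
              rw [ENNReal.ofReal_add (mul_nonneg (Nat.cast_nonneg _) hδ0.le)
                (mul_nonneg (Nat.cast_nonneg _) (mul_nonneg hδ0.le (hS0 m)))]
          _ ≤ ENNReal.ofReal (δ * S (m + 1)) := by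
              refine ENNReal.ofReal_le_ofReal ?_
              have hcard : ((Nin E ν₁).card : ℝ) ≤ N := by
                rw [hN]; exact_mod_cast card_Nin_le E ν₁
              have h2 : (0:ℝ) ≤ δ * (1 + S m) :=
                mul_nonneg hδ0.le (by linarith [hS0 m])
              calc ((Nin E ν₁).card : ℝ) * δ + ((Nin E ν₁).card : ℝ) * (δ * S m)
                  = ((Nin E ν₁).card : ℝ) * (δ * (1 + S m)) := by ring
                _ ≤ N * (δ * (1 + S m)) := mul_le_mul_of_nonneg_right hcard h2
                _ = δ * (N * (1 + S m)) := by ring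
                _ = δ * S (m + 1) := by rw [hSrec m]
      · -- source node
        have hMu : ν₁ ∈ Mu E := not_mem_Ml hMl
        set BadB : Set Ω :=
          {ω | ¬ (opNorm (blockOf (Omega (fun r => ofBlocks (Tstar E p r)) (s + m) (s + 1)) ν₁ ν₂ -
            blockOf (Omega (fun r => ofBlocks (fun μ ν' => T r μ ν' ω)) (s + m) (s + 1)) ν₁ ν₂) ≤
            γ₁ * S m)} with hBadB
        have hsubset : {ω | ¬ (opNorm
            (blockOf (Omega (fun r => ofBlocks (Tstar E p r)) (s + (m+1)) (s + 1)) ν₁ ν₂ -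
             blockOf (Omega (fun r => ofBlocks (fun μ ν => T r μ ν ω)) (s + (m+1)) (s + 1)) ν₁ ν₂) ≤
            γ₁ * S (m+1))} ⊆ BadB ∪ C := by
          intro ω hω
          by_contra hcon
          obtain ⟨hB', hC⟩ := not_or.1 hcon
          have hCC : (∀ μ ν : Fin K, opNorm (T (s + m + 1) μ ν ω) ≤ 1) ∧
              (∀ μ ν : Fin K, ¬ ((μ ∈ Ml E ∧ ν ∈ Nin E μ) ∨ (μ = ν ∧ μ ∈ Mu E)) →
                T (s + m + 1) μ ν ω = 0) ∧
              (∀ μ ∈ Mu E, T (s + m + 1) μ μ ω = 1) := not_not.1 hC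
          obtain ⟨hbd, hzero, hone⟩ := hCC
          have hB : opNorm (blockOf (Omega (fun r => ofBlocks (Tstar E p r)) (s + m) (s + 1)) ν₁ ν₂ -
              blockOf (Omega (fun r => ofBlocks (fun μ ν' => T r μ ν' ω)) (s + m) (s + 1)) ν₁ ν₂) ≤
              γ₁ * S m := not_not.1 hB'
          apply hω
          have hrec : blockOf (Omega (fun r => ofBlocks (Tstar E p r)) (s + (m+1)) (s + 1)) ν₁ ν₂ -
              blockOf (Omega (fun r => ofBlocks (fun μ ν => T r μ ν ω)) (s + (m+1)) (s + 1)) ν₁ ν₂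
              = ∑ ν, (Tstar E p (s + m + 1) ν₁ ν *
                  blockOf (Omega (fun r => ofBlocks (Tstar E p r)) (s + m) (s + 1)) ν ν₂ -
                T (s + m + 1) ν₁ ν ω *
                  blockOf (Omega (fun r => ofBlocks (fun μ ν' => T r μ ν' ω)) (s + m) (s + 1)) ν ν₂) := by
            rw [show s + (m + 1) = s + m + 1 from rfl, Omega_succ, Omega_succ,
              blockOf_mul, blockOf_mul, ← Finset.sum_sub_distrib]
            exact Finset.sum_congr rfl fun ν _ => by rw [blockOf_ofBlocks, blockOf_ofBlocks]
          have hz : ∀ ν ∉ ({ν₁} : Finset (Fin K)), Tstar E p (s + m + 1) ν₁ ν (d := d) = 0 ∧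
              T (s + m + 1) ν₁ ν ω = 0 := by
            intro ν hν
            rw [Finset.mem_singleton] at hν
            have hne : ν₁ ≠ ν := fun h => hν h.symm
            refine ⟨by simp [Tstar, hMl, hne], hzero ν₁ ν ?_⟩
            rintro (⟨hml, _⟩ | ⟨rfl, _⟩)
            · exact hMl hml
            · exact hν rfl
          have hUV : ∀ ν ∈ ({ν₁} : Finset (Fin K)),
              opNorm (Tstar E p (s + m + 1) ν₁ ν (d := d) - T (s + m + 1) ν₁ ν ω) ≤ (0:ℝ) := by
            intro ν hν
            rw [Finset.mem_singleton] at hν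
            subst hν
            have h1 : Tstar E p (s + m + 1) ν ν (d := d) = 1 := by
              simp only [Tstar]
              rw [if_neg hMl]
              simp
            rw [h1, hone ν hMu, sub_self, opNorm_zero]
          have hBB : ∀ ν ∈ ({ν₁} : Finset (Fin K)),
              opNorm (blockOf (Omega (fun r => ofBlocks (Tstar E p r)) (s + m) (s + 1)) ν ν₂ -
                blockOf (Omega (fun r => ofBlocks (fun μ ν' => T r μ ν' ω)) (s + m) (s + 1)) ν ν₂) ≤
              γ₁ * S m := by
            intro ν hν
            rw [Finset.mem_singleton] at hν
            subst hν
            exact hB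
          have hbound := sum_diff_bound ({ν₁} : Finset (Fin K))
            (fun ν => Tstar E p (s + m + 1) ν₁ ν)
            (fun ν => T (s + m + 1) ν₁ ν ω)
            (fun ν => blockOf (Omega (fun r => ofBlocks (Tstar E p r)) (s + m) (s + 1)) ν ν₂)
            (fun ν => blockOf (Omega (fun r => ofBlocks (fun μ ν' => T r μ ν' ω)) (s + m) (s + 1)) ν ν₂)
            (fun _ => (0:ℝ)) (fun _ => γ₁ * S m)
            hz hUV (fun ν _ => hbd ν₁ ν)
            (fun ν _ => OmegaStar_block_le hd E p hpnn hprow m s ν ν₂)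
            hBB (fun ν _ => le_rfl)
          rw [hrec]
          refine hbound.trans ?_
          rw [Finset.sum_singleton, zero_add]
          exact mul_le_mul_of_nonneg_left (hSmono m) hγ₁0.le
        refine (measure_mono hsubset).trans ?_
        calc P (BadB ∪ C) ≤ P BadB + P C := measure_union_le _ _
          _ ≤ ENNReal.ofReal (δ * S m) + 0 := by rw [hC0]; exact add_le_add_left (ih ν₁ ν₂) 0
          _ = ENNReal.ofReal (δ * S m) := by rw [add_zero]
          _ ≤ ENNReal.ofReal (δ * S (m + 1)) := by
              refine ENNReal.ofReal_le_ofReal ?_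
              exact mul_le_mul_of_nonneg_left (hSmono m) hδ0.le
  -- wrap-up: pass to the complement
  set Good : Set Ω := {ω | opNorm
      (blockOf (Omega (fun r => ofBlocks (Tstar E p r)) (s + m) (s + 1)) ν₁ ν₂ -
       blockOf (Omega (fun r => ofBlocks (fun μ ν => T r μ ν ω)) (s + m) (s + 1)) ν₁ ν₂) ≤
      γ₁ * S m} with hGood
  set Bad : Set Ω := {ω | ¬ (opNorm
      (blockOf (Omega (fun r => ofBlocks (Tstar E p r)) (s + m) (s + 1)) ν₁ ν₂ -
       blockOf (Omega (fun r => ofBlocks (fun μ ν => T r μ ν ω)) (s + m) (s + 1)) ν₁ ν₂) ≤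
      γ₁ * S m)} with hBad
  have h1 : (1 : ENNReal) ≤ P Good + P Bad := by
    have huniv : (Set.univ : Set Ω) ⊆ Good ∪ Bad := by
      intro ω _
      by_cases h : opNorm
          (blockOf (Omega (fun r => ofBlocks (Tstar E p r)) (s + m) (s + 1)) ν₁ ν₂ -
           blockOf (Omega (fun r => ofBlocks (fun μ ν => T r μ ν ω)) (s + m) (s + 1)) ν₁ ν₂) ≤
          γ₁ * S m
      · exact Or.inl h
      · exact Or.inr h
    calc (1 : ENNReal) = P Set.univ := measure_univ.symm
      _ ≤ P (Good ∪ Bad) := measure_mono huniv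
      _ ≤ P Good + P Bad := measure_union_le _ _
  have heq : ENNReal.ofReal (1 - δ * S m) = 1 - ENNReal.ofReal (δ * S m) := by
    rw [ENNReal.ofReal_sub _ (mul_nonneg hδ0.le (hS0 m)), ENNReal.ofReal_one]
  have h2 : (1 : ENNReal) - ENNReal.ofReal (δ * S m) ≤ 1 - P Bad :=
    tsub_le_tsub_left (key m ν₁ ν₂) 1
  have h3 : (1 : ENNReal) - P Bad ≤ P Good := by
    rw [tsub_le_iff_right]
    exact h1
  exact heq.le.trans (h2.trans h3)
end

section
/- For every node μ ∈ M_l^c and all integers t ≥ s ≥ 0 with t − s ≥ K − 1, the total mass retained on learning models is bounded below: ∑_{ν∈M_l} J_{t,s+1,μ,ν} ≥ α^{K−1}. -/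
open Matrix Finset Filter

noncomputable section

/-- The edge relation: `EdgeRel E a b` iff `(a, b) ∈ E`. -/
def EdgeRel {K : ℕ} (E : Finset (Fin K × Fin K)) : Fin K → Fin K → Prop :=
  fun a b => (a, b) ∈ E

open Classical in
/-- Models in `M_l` not reachable by a directed path from any node of `M_u`. -/
def MlInf {K : ℕ} (E : Finset (Fin K × Fin K)) : Finset (Fin K) :=
  (Ml E).filter (fun μ => ∀ ν ∈ Mu E, ¬ Relation.TransGen (EdgeRel E) ν μ)

open Classical in
/-- Models in `M_l^∞` together with models reachable from some node of `M_l^∞`. -/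
def Mlc {K : ℕ} (E : Finset (Fin K × Fin K)) : Finset (Fin K) :=
  (Ml E).filter (fun μ => μ ∈ MlInf E ∨ ∃ ν ∈ MlInf E, Relation.TransGen (EdgeRel E) ν μ)

/-- The non-collapsing learning models. -/
def Mlnc {K : ℕ} (E : Finset (Fin K × Fin K)) : Finset (Fin K) := Ml E \ Mlc E

/-- `Jmat P t s = P_t P_{t−1} ⋯ P_s` (equal to `I` when `s = t + 1`). -/
def Jmat {K : ℕ} (P : ℕ → Matrix (Fin K) (Fin K) ℝ) (t s : ℕ) : Matrix (Fin K) (Fin K) ℝ :=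
  ((List.range' s (t + 1 - s)).reverse.map P).prod

/-- The `E`-paths `v_1 → ⋯ → v_x → μ` of length `x` ending at `μ`, encoded as a function
`v : Fin (x+1) → Fin K` with `v x = μ` and `(v i, v (i+1)) ∈ E` for all `i < x`. -/
def pathsTo {K : ℕ} (E : Finset (Fin K × Fin K)) (x : ℕ) (μ : Fin K) :
    Finset (Fin (x + 1) → Fin K) :=
  Finset.univ.filter (fun v => v (Fin.last x) = μ ∧ ∀ i : Fin x, (v i.castSucc, v i.succ) ∈ E)

end

section Aux

variable {K : ℕ} (E : Finset (Fin K × Fin K))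

lemma Jmat_refl (P : ℕ → Matrix (Fin K) (Fin K) ℝ) (t : ℕ) :
    Jmat P t (t + 1) = 1 := by
  simp [Jmat]

lemma Jmat_succ' (P : ℕ → Matrix (Fin K) (Fin K) ℝ) (t s : ℕ) (h : s ≤ t + 1) :
    Jmat P (t + 1) s = P (t + 1) * Jmat P t s := by
  unfold Jmat
  have h1 : t + 1 + 1 - s = (t + 1 - s) + 1 := by omega
  have h2 : s + (t + 1 - s) = t + 1 := by omega
  rw [h1, show t + 1 - s + 1 = 1 + (t + 1 - s) from by omega,
    ← Nat.add_comm (t + 1 - s) 1,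
    ← List.range'_append_1 (s := s) (m := t + 1 - s) (n := 1), h2]
  simp

/-- membership facts -/
lemma mem_Ml_iff (μ : Fin K) : μ ∈ Ml E ↔ Nin E μ ≠ ∅ := by
  simp [Ml]

lemma mem_Mu_iff (μ : Fin K) : μ ∈ Mu E ↔ Nin E μ = ∅ := by
  simp [Mu]

lemma MlInf_subset_Ml : MlInf E ⊆ Ml E := by
  classical
  intro x hx
  simp only [MlInf, Finset.mem_filter] at hx
  exact hx.1

/-- In-neighbours of a node of `MlInf` lie in `MlInf`. -/
lemma nin_mem_MlInf {μ ν : Fin K} (hμ : μ ∈ MlInf E) (hν : ν ∈ Nin E μ) :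
    ν ∈ MlInf E := by
  classical
  simp only [MlInf, Finset.mem_filter] at hμ ⊢
  obtain ⟨hμMl, hμpath⟩ := hμ
  have hedge : (ν, μ) ∈ E := by simpa [Nin] using hν
  have hνMl : ν ∈ Ml E := by
    rw [mem_Ml_iff]
    intro hnil
    exact hμpath ν (by rw [mem_Mu_iff]; exact hnil)
      (Relation.TransGen.single hedge)
  refine ⟨hνMl, fun ρ hρ hpath => ?_⟩
  exact hμpath ρ hρ (hpath.tail hedge)

open Classical in
/-- Nodes reachable from `MlInf` in at most `m` steps. -/
noncomputable def Sreach : ℕ → Finset (Fin K)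
  | 0 => MlInf E
  | m + 1 => Sreach m ∪ Finset.univ.filter (fun μ => ∃ ν ∈ Sreach m, (ν, μ) ∈ E)

lemma Sreach_mono {m n : ℕ} (h : m ≤ n) : Sreach E m ⊆ Sreach E n := by
  induction n with
  | zero => simpa [Nat.le_zero.mp h]
  | succ n ih =>
    rcases Nat.lt_or_ge m (n+1) with h' | h'
    · exact (ih (by omega)).trans (by rw [Sreach]; exact Finset.subset_union_left)
    · have : m = n + 1 := by omega
      subst this; rfl

lemma Sreach_stab {m : ℕ} (h : Sreach E (m + 1) = Sreach E m) :
    ∀ k, Sreach E (m + k) = Sreach E m := by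
  intro k
  induction k with
  | zero => rfl
  | succ k ih =>
    have : m + (k + 1) = (m + k) + 1 := by omega
    rw [this, Sreach, ih, ← Sreach, h]

lemma Sreach_all_subset (hne : (MlInf E).Nonempty) (n : ℕ) :
    Sreach E n ⊆ Sreach E (K - 1) := by
  classical
  -- find a stabilization point m < K
  have hstab : ∃ m < K, Sreach E (m + 1) = Sreach E m := by
    by_contra hc
    push_neg at hc
    have hgrow : ∀ m ≤ K, m + 1 ≤ (Sreach E m).card := by
      intro m hm
      induction m with
      | zero => simpa [Sreach] using Finset.card_pos.mpr hne
      | succ m ih =>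
        have hsub : Sreach E m ⊂ Sreach E (m + 1) :=
          (Finset.ssubset_iff_of_subset (Sreach_mono E (Nat.le_succ m))).mpr
            (by
              rcases Finset.exists_of_ssubset
                (lt_of_le_of_ne (Sreach_mono E (Nat.le_succ m))
                  (fun he => hc m (by omega) he.symm)) with ⟨x, hx, hx'⟩
              exact ⟨x, hx, hx'⟩)
        have := Finset.card_lt_card hsub
        have := ih (by omega)
        omega
    have h1 := hgrow K le_rfl
    have h2 : (Sreach E K).card ≤ K := by
      simpa using Finset.card_le_univ (Sreach E K)
    omega
  obtain ⟨m, hmK, hm⟩ := hstab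
  have hstable : ∀ k, m ≤ k → Sreach E k = Sreach E m := by
    intro k hk
    have := Sreach_stab E hm (k - m)
    rwa [show m + (k - m) = k from by omega] at this
  rcases Nat.lt_or_ge n (K - 1) with h | h
  · exact Sreach_mono E (by omega)
  · rcases Nat.lt_or_ge n m with h' | h'
    · exact Sreach_mono E (by omega)
    · rw [hstable n h', ← hstable (K - 1) (by omega)]

lemma mem_Sreach_of_transGen {ν μ : Fin K} (hν : ν ∈ MlInf E)
    (h : Relation.TransGen (EdgeRel E) ν μ) : ∃ n, μ ∈ Sreach E n := by
  classical
  induction h with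
  | single h1 =>
    exact ⟨1, by
      rw [Sreach]
      exact Finset.mem_union_right _ (Finset.mem_filter.mpr
        ⟨Finset.mem_univ _, ⟨ν, hν, h1⟩⟩)⟩
  | tail _ h2 ih =>
    obtain ⟨n, hn⟩ := ih
    exact ⟨n + 1, by
      rw [Sreach]
      exact Finset.mem_union_right _ (Finset.mem_filter.mpr
        ⟨Finset.mem_univ _, ⟨_, hn, h2⟩⟩)⟩

end Aux

section Mass

variable {K : ℕ} (E : Finset (Fin K × Fin K)) (α : ℝ)
  (P : ℕ → Matrix (Fin K) (Fin K) ℝ)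

lemma Ml_not_Mu {μ : Fin K} (h : μ ∈ Ml E) : μ ∉ Mu E := by
  rw [mem_Ml_iff] at h
  rw [mem_Mu_iff]
  exact h

lemma Jmat_entry_nonneg (hPnn : ∀ t, 1 ≤ t → ∀ μ ν : Fin K, 0 ≤ P t μ ν) :
    ∀ r s : ℕ, ∀ μ ν : Fin K, 0 ≤ Jmat P (s + r) (s + 1) μ ν := by
  intro r
  induction r with
  | zero =>
    intro s μ ν
    rw [Nat.add_zero, Jmat_refl, Matrix.one_apply]
    split <;> norm_num
  | succ r ih =>
    intro s μ ν
    rw [show s + (r + 1) = (s + r) + 1 from rfl,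
      Jmat_succ' P (s + r) (s + 1) (by omega), Matrix.mul_apply]
    exact Finset.sum_nonneg fun ρ _ => mul_nonneg (hPnn _ (by omega) _ _) (ih s ρ ν)

lemma mass_zero
    (hPzero : ∀ t, 1 ≤ t → ∀ μ ν : Fin K,
      ¬ ((μ ∈ Ml E ∧ ν ∈ Nin E μ) ∨ (μ = ν ∧ μ ∈ Mu E)) → P t μ ν = 0)
    (hPnn : ∀ t, 1 ≤ t → ∀ μ ν : Fin K, 0 ≤ P t μ ν)
    (hProw : ∀ t, 1 ≤ t → ∀ μ ∈ Ml E, ∑ ν ∈ Nin E μ, P t μ ν = 1) :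
    ∀ r s : ℕ, ∀ μ : Fin K, μ ∈ MlInf E →
      (1 : ℝ) ≤ ∑ ν ∈ MlInf E, Jmat P (s + r) (s + 1) μ ν := by
  intro r
  induction r with
  | zero =>
    intro s μ hμ
    rw [Nat.add_zero, Jmat_refl]
    simp only [Matrix.one_apply]
    rw [Finset.sum_ite_eq (MlInf E) μ (fun _ => (1:ℝ))]
    simp [hμ]
  | succ r ih =>
    intro s μ hμ
    have hμMl : μ ∈ Ml E := MlInf_subset_Ml E hμ
    rw [show s + (r + 1) = (s + r) + 1 from rfl,
      Jmat_succ' P (s + r) (s + 1) (by omega)]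
    have expand : ∑ ν ∈ MlInf E, (P ((s + r) + 1) * Jmat P (s + r) (s + 1)) μ ν
        = ∑ ρ, P ((s + r) + 1) μ ρ * ∑ ν ∈ MlInf E, Jmat P (s + r) (s + 1) ρ ν := by
      simp_rw [Matrix.mul_apply, Finset.mul_sum]
      rw [Finset.sum_comm]
    rw [expand]
    have hext : ∑ ρ, P ((s + r) + 1) μ ρ * ∑ ν ∈ MlInf E, Jmat P (s + r) (s + 1) ρ ν
        = ∑ ρ ∈ Nin E μ, P ((s + r) + 1) μ ρ * ∑ ν ∈ MlInf E, Jmat P (s + r) (s + 1) ρ ν := by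
      refine (Finset.sum_subset (Finset.subset_univ _) fun ρ _ hρ => ?_).symm
      have : P ((s + r) + 1) μ ρ = 0 := by
        refine hPzero _ (by omega) μ ρ ?_
        rintro (⟨-, h⟩ | ⟨-, h⟩)
        · exact hρ h
        · exact Ml_not_Mu E hμMl h
      rw [this, zero_mul]
    rw [hext]
    calc (1 : ℝ) = ∑ ρ ∈ Nin E μ, P ((s + r) + 1) μ ρ :=
          (hProw _ (by omega) μ hμMl).symm
      _ ≤ _ := by
          refine Finset.sum_le_sum fun ρ hρ => ?_
          exact le_mul_of_one_le_right (hPnn _ (by omega) _ _)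
            (ih s ρ (nin_mem_MlInf E hμ hρ))

lemma mass (hα0 : 0 < α) (hα1 : α < 1)
    (hPzero : ∀ t, 1 ≤ t → ∀ μ ν : Fin K,
      ¬ ((μ ∈ Ml E ∧ ν ∈ Nin E μ) ∨ (μ = ν ∧ μ ∈ Mu E)) → P t μ ν = 0)
    (hPnn : ∀ t, 1 ≤ t → ∀ μ ν : Fin K, 0 ≤ P t μ ν)
    (hProw : ∀ t, 1 ≤ t → ∀ μ ∈ Ml E, ∑ ν ∈ Nin E μ, P t μ ν = 1)
    (hPα : ∀ t, 1 ≤ t → ∀ ν μ : Fin K, (ν, μ) ∈ E → α ≤ P t μ ν) :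
    ∀ m r s : ℕ, ∀ μ : Fin K, m ≤ r → μ ∈ Sreach E m →
      α ^ m ≤ ∑ ν ∈ MlInf E, Jmat P (s + r) (s + 1) μ ν := by
  intro m
  induction m with
  | zero =>
    intro r s μ _ hμ
    rw [pow_zero]
    exact mass_zero E P hPzero hPnn hProw r s μ hμ
  | succ m ih =>
    intro r s μ hmr hμ
    rw [Sreach] at hμ
    rcases Finset.mem_union.mp hμ with h | h
    · calc α ^ (m + 1) ≤ α ^ m :=
            pow_le_pow_of_le_one hα0.le hα1.le (Nat.le_succ m)
        _ ≤ _ := ih r s μ (by omega) h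
    · simp only [Finset.mem_filter] at h
      obtain ⟨-, ν, hν, hedge⟩ := h
      obtain ⟨r', rfl⟩ : ∃ r', r = r' + 1 := ⟨r - 1, by omega⟩
      rw [show s + (r' + 1) = (s + r') + 1 from rfl,
        Jmat_succ' P (s + r') (s + 1) (by omega)]
      have expand : ∑ ν' ∈ MlInf E, (P ((s + r') + 1) * Jmat P (s + r') (s + 1)) μ ν'
          = ∑ ρ, P ((s + r') + 1) μ ρ * ∑ ν' ∈ MlInf E, Jmat P (s + r') (s + 1) ρ ν' := by
        simp_rw [Matrix.mul_apply, Finset.mul_sum]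
        rw [Finset.sum_comm]
      rw [expand]
      have hterm : α ^ (m + 1)
          ≤ P ((s + r') + 1) μ ν * ∑ ν' ∈ MlInf E, Jmat P (s + r') (s + 1) ν ν' := by
        rw [pow_succ']
        exact mul_le_mul (hPα _ (by omega) ν μ hedge)
          (ih r' s ν (by omega) hν) (pow_nonneg hα0.le m) (hPnn _ (by omega) _ _)
      refine le_trans hterm (Finset.single_le_sum
        (f := fun ρ => P ((s + r') + 1) μ ρ * ∑ ν' ∈ MlInf E, Jmat P (s + r') (s + 1) ρ ν')
        (fun ρ _ => ?_) (Finset.mem_univ ν))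
      exact mul_nonneg (hPnn _ (by omega) _ _)
        (Finset.sum_nonneg fun ν' _ => Jmat_entry_nonneg P hPnn r' s ρ ν')

end Mass

/-- For every `μ ∈ M_l^c` and all `t ≥ s ≥ 0` with `t − s ≥ K − 1`,
`∑_{ν∈M_l} J_{t,s+1,μ,ν} ≥ α^(K−1)`. -/
theorem stmt12
    {K : ℕ} (hK : 1 ≤ K)
    (E : Finset (Fin K × Fin K))
    (α : ℝ) (hα0 : 0 < α) (hα1 : α < 1)
    (P : ℕ → Matrix (Fin K) (Fin K) ℝ)
    (hPzero : ∀ t, 1 ≤ t → ∀ μ ν : Fin K,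
      ¬ ((μ ∈ Ml E ∧ ν ∈ Nin E μ) ∨ (μ = ν ∧ μ ∈ Mu E)) → P t μ ν = 0)
    (hPnn : ∀ t, 1 ≤ t → ∀ μ ν : Fin K, 0 ≤ P t μ ν)
    (hPu : ∀ t, 1 ≤ t → ∀ μ ∈ Mu E, P t μ μ = 1)
    (hProw : ∀ t, 1 ≤ t → ∀ μ ∈ Ml E, ∑ ν ∈ Nin E μ, P t μ ν = 1)
    (hPα : ∀ t, 1 ≤ t → ∀ ν μ : Fin K, (ν, μ) ∈ E → α ≤ P t μ ν) :
    ∀ μ ∈ Mlc E, ∀ t s : ℕ, s ≤ t → K - 1 ≤ t - s →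
      α ^ (K - 1) ≤ ∑ ν ∈ Ml E, Jmat P t (s + 1) μ ν := by
  classical
  intro μ hμ t s hst hKts
  simp only [Mlc, Finset.mem_filter] at hμ
  obtain ⟨hμMl, hcase⟩ := hμ
  have hne : (MlInf E).Nonempty := by
    rcases hcase with h | ⟨ν, hν, -⟩
    exacts [⟨μ, h⟩, ⟨ν, hν⟩]
  have hS : ∃ n, μ ∈ Sreach E n := by
    rcases hcase with h | ⟨ν, hν, hTG⟩
    · exact ⟨0, h⟩
    · exact mem_Sreach_of_transGen E hν hTG
  obtain ⟨n, hn⟩ := hS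
  have hμS : μ ∈ Sreach E (K - 1) := Sreach_all_subset E hne n hn
  have hmain := mass E α P hα0 hα1 hPzero hPnn hProw hPα (K - 1) (t - s) s μ hKts hμS
  rw [show s + (t - s) = t from by omega] at hmain
  refine le_trans hmain (Finset.sum_le_sum_of_subset_of_nonneg (MlInf_subset_Ml E) ?_)
  intro ν hν _
  have := Jmat_entry_nonneg P hPnn (t - s) s μ ν
  rwa [show s + (t - s) = t from by omega] at this
end

section
/- Fix an integer s ≥ K and a node u ∈ M_l ∖ M_l^∞. Then the total weight of length-K E-paths ending at u that avoid M_l^∞ is at most 1 − α^K; that is, the sum over all E-paths v_1 → v_2 → ⋯ → v_K → u of length K with v_1, …, v_K ∉ M_l^∞ of the products P_{s,u,v_K} · P_{s−1,v_K,v_{K−1}} ⋯ P_{s−K+1,v_2,v_1} is at most 1 − α^K. -/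
open Matrix Finset Filter

section Aux

variable {K : ℕ}

lemma aux_total_sum :
    ∀ (n : ℕ) (Q : ℕ → Matrix (Fin K) (Fin K) ℝ),
      (∀ j (μ : Fin K), ∑ ν, Q j μ ν = 1) → ∀ u : Fin K,
      ∑ v ∈ Finset.univ.filter (fun v : Fin (n+1) → Fin K => v (Fin.last n) = u),
        ∏ j : Fin n, Q j (v j.succ) (v j.castSucc) = 1 := by
  intro n
  induction n with
  | zero =>
    intro Q hQ u
    have hset : (Finset.univ.filter (fun v : Fin 1 → Fin K => v (Fin.last 0) = u))
        = {fun _ => u} := by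
      ext v
      simp only [Finset.mem_filter, Finset.mem_univ, true_and, Finset.mem_singleton]
      constructor
      · intro h; funext i; have : i = Fin.last 0 := Subsingleton.elim _ _; rw [this, h]
      · intro h; rw [h]
    rw [hset]
    simp
  | succ n ih =>
    intro Q hQ u
    rw [Finset.sum_filter]
    rw [← Equiv.sum_comp (Fin.consEquiv (fun _ : Fin (n+2) => Fin K))]
    rw [Fintype.sum_prod_type]
    have key : ∀ w : Fin (n+1) → Fin K, ∀ x : Fin K,
        (Fin.consEquiv (fun _ : Fin (n+2) => Fin K)) (x, w) = Fin.cons x w := fun _ _ => rfl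
    simp only [key]
    rw [Finset.sum_comm]
    have step : ∀ w : Fin (n+1) → Fin K,
        (∑ x : Fin K, if (Fin.cons x w : Fin (n+2) → Fin K) (Fin.last (n+1)) = u then
            ∏ j : Fin (n+1), Q j ((Fin.cons x w : Fin (n+2) → Fin K) j.succ)
              ((Fin.cons x w : Fin (n+2) → Fin K) j.castSucc) else 0)
        = (if w (Fin.last n) = u then
            ∏ j : Fin n, Q (j + 1) (w j.succ) (w j.castSucc) else 0) := by
      intro w
      have hlast : ∀ x : Fin K, (Fin.cons x w : Fin (n+2) → Fin K) (Fin.last (n+1)) = w (Fin.last n) := by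
        intro x
        have : Fin.last (n+1) = (Fin.last n).succ := rfl
        rw [this, Fin.cons_succ]
      have hprod : ∀ x : Fin K,
          (∏ j : Fin (n+1), Q j ((Fin.cons x w : Fin (n+2) → Fin K) j.succ)
            ((Fin.cons x w : Fin (n+2) → Fin K) j.castSucc))
          = Q 0 (w 0) x * ∏ j : Fin n, Q (j + 1) (w j.succ) (w j.castSucc) := by
        intro x
        rw [Fin.prod_univ_succ]
        simp only [← Fin.succ_castSucc, Fin.cons_succ, Fin.castSucc_zero, Fin.cons_zero,
          Fin.val_succ, Fin.val_zero]
      simp only [hlast, hprod]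
      by_cases hc : w (Fin.last n) = u
      · simp only [if_pos hc, ← Finset.sum_mul]
        rw [show (∑ x : Fin K, Q 0 (w 0) x) = 1 from hQ 0 (w 0), one_mul]
      · simp [if_neg hc]
    rw [Finset.sum_congr rfl (fun w _ => step w)]
    rw [← Finset.sum_filter]
    exact ih (fun j => Q (j + 1)) (fun j μ => hQ (j + 1) μ) u

lemma aux_mem_Ml {E : Finset (Fin K × Fin K)} {μ : Fin K} :
    μ ∈ Ml E ↔ Nin E μ ≠ ∅ := by simp [Ml]

lemma aux_mem_Mu {E : Finset (Fin K × Fin K)} {μ : Fin K} :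
    μ ∈ Mu E ↔ Nin E μ = ∅ := by simp [Mu]

lemma aux_rowsum (E : Finset (Fin K × Fin K))
    (P : ℕ → Matrix (Fin K) (Fin K) ℝ)
    (hPzero : ∀ t, 1 ≤ t → ∀ μ ν : Fin K,
      ¬ ((μ ∈ Ml E ∧ ν ∈ Nin E μ) ∨ (μ = ν ∧ μ ∈ Mu E)) → P t μ ν = 0)
    (hPu : ∀ t, 1 ≤ t → ∀ μ ∈ Mu E, P t μ μ = 1)
    (hProw : ∀ t, 1 ≤ t → ∀ μ ∈ Ml E, ∑ ν ∈ Nin E μ, P t μ ν = 1)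
    (t : ℕ) (ht : 1 ≤ t) (μ : Fin K) : ∑ ν, P t μ ν = 1 := by
  by_cases hμ : μ ∈ Ml E
  · rw [← hProw t ht μ hμ]
    symm
    apply Finset.sum_subset (Finset.subset_univ _)
    intro ν _ hν
    apply hPzero t ht
    rintro (⟨_, h⟩ | ⟨_, h⟩)
    · exact hν h
    · rw [aux_mem_Mu] at h
      exact (aux_mem_Ml.mp hμ) h
  · have hμu : μ ∈ Mu E := by
      rw [aux_mem_Mu]
      by_contra h
      exact hμ (aux_mem_Ml.mpr h)
    rw [Finset.sum_eq_single μ]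
    · exact hPu t ht μ hμu
    · intro ν _ hν
      apply hPzero t ht
      rintro (⟨h, _⟩ | ⟨h, _⟩)
      · exact hμ h
      · exact hν h.symm
    · intro h; exact absurd (Finset.mem_univ μ) h

/-- From the transitive closure, extract an ℕ-indexed path. -/
lemma aux_exists_path (E : Finset (Fin K × Fin K)) {a b : Fin K}
    (h : Relation.TransGen (EdgeRel E) a b) :
    ∃ L, ∃ w : ℕ → Fin K, w 0 = a ∧ w L = b ∧ ∀ i < L, (w i, w (i + 1)) ∈ E := by
  induction h with
  | @single c hac =>
    refine ⟨1, fun i => if i = 0 then a else c, by simp, by norm_num, ?_⟩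
    intro i hi
    interval_cases i
    simpa [EdgeRel] using hac
  | @tail b' c hab' hb'c ih =>
    obtain ⟨L, w, hw0, hwL, hwe⟩ := ih
    refine ⟨L + 1, fun i => if i ≤ L then w i else c, by simp [hw0], ?_, ?_⟩
    · simp only [if_neg (by omega : ¬ (L + 1 ≤ L))]
    · intro i hi
      rcases Nat.lt_or_ge i L with h' | h'
      · simp only [if_pos (Nat.le_of_lt h'), if_pos (Nat.succ_le_of_lt h')]
        exact hwe i h'
      · have hiL : i = L := by omega
        simp only [if_pos (by omega : i ≤ L), if_neg (by omega : ¬ (i + 1 ≤ L))]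
        rw [hiL, hwL]
        exact hb'c

/-- A shortest path has length `< K`. -/
lemma aux_short_path (E : Finset (Fin K × Fin K)) {a b : Fin K}
    (h : Relation.TransGen (EdgeRel E) a b) :
    ∃ L < K, ∃ w : ℕ → Fin K, w 0 = a ∧ w L = b ∧ ∀ i < L, (w i, w (i + 1)) ∈ E := by
  classical
  have hex : ∃ L, ∃ w : ℕ → Fin K, w 0 = a ∧ w L = b ∧ ∀ i < L, (w i, w (i + 1)) ∈ E :=
    aux_exists_path E h
  set QP : ℕ → Prop := fun L => ∃ w : ℕ → Fin K, w 0 = a ∧ w L = b ∧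
    ∀ i < L, (w i, w (i + 1)) ∈ E with hQP
  have hfind := Nat.find_spec hex
  set L := Nat.find hex with hLdef
  obtain ⟨w, hw0, hwL, hwe⟩ := hfind
  refine ⟨L, ?_, w, hw0, hwL, hwe⟩
  by_contra hLK
  push_neg at hLK
  -- pigeonhole: w restricted to Fin (L+1) is not injective
  have hcard : Fintype.card (Fin K) < Fintype.card (Fin (L + 1)) := by
    simp only [Fintype.card_fin]; omega
  obtain ⟨i, j, hij, heq⟩ :=
    Fintype.exists_ne_map_eq_of_card_lt (fun i : Fin (L + 1) => w i) hcard
  -- wlog i < j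
  obtain ⟨i', j', hij', heq'⟩ : ∃ i' j' : ℕ, i' < j' ∧ j' ≤ L ∧ w i' = w j' := by
    rcases lt_or_gt_of_ne hij with h' | h'
    · exact ⟨i, j, h', ⟨Nat.lt_succ_iff.mp j.isLt, heq⟩⟩
    · exact ⟨j, i, h', ⟨Nat.lt_succ_iff.mp i.isLt, heq.symm⟩⟩
  obtain ⟨hj'L, heq'⟩ := heq'
  set d := j' - i' with hd
  have hd1 : 1 ≤ d := by omega
  -- splice out the cycle
  have hshort : ∃ w' : ℕ → Fin K, w' 0 = a ∧ w' (L - d) = b ∧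
      ∀ m < L - d, (w' m, w' (m + 1)) ∈ E := by
    set w' : ℕ → Fin K := fun m => if m < i' then w m else w (m + d) with hw'def
    have hw'eq : ∀ m, w' m = if m < i' then w m else w (m + d) := fun m => rfl
    refine ⟨w', ?_, ?_, ?_⟩
    · rw [hw'eq 0]
      by_cases h0 : 0 < i'
      · rw [if_pos h0, hw0]
      · have hi0 : i' = 0 := by omega
        rw [if_neg h0, show 0 + d = j' from by omega, ← heq', hi0, hw0]
    · rw [hw'eq, if_neg (by omega : ¬ (L - d < i')), show L - d + d = L from by omega, hwL]
    · intro m hm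
      rw [hw'eq m, hw'eq (m + 1)]
      by_cases h1 : m < i'
      · rw [if_pos h1]
        by_cases h2 : m + 1 < i'
        · rw [if_pos h2]; exact hwe m (by omega)
        · rw [if_neg h2, show m + 1 + d = j' from by omega, ← heq',
            show i' = m + 1 from by omega]
          exact hwe m (by omega)
      · rw [if_neg h1, if_neg (by omega : ¬ (m + 1 < i')),
          show m + 1 + d = m + d + 1 from by omega]
        exact hwe (m + d) (by omega)
  have : Nat.find hex ≤ L - d := Nat.find_min' hex hshort
  omega

end Aux

/-- For `s ≥ K` and `u ∈ M_l ∖ M_l^∞`, the total weight of length-`K`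
`E`-paths ending at `u` that avoid `M_l^∞`, i.e. the sum over all `E`-paths
`v_1 → ⋯ → v_K → u` with `v_1, …, v_K ∉ M_l^∞` of
`P_{s,u,v_K} · P_{s−1,v_K,v_{K−1}} ⋯ P_{s−K+1,v_2,v_1}`, is at most `1 − α^K`. -/
theorem stmt15
    {K : ℕ} (hK : 1 ≤ K)
    (E : Finset (Fin K × Fin K))
    (α : ℝ) (hα0 : 0 < α) (hα1 : α < 1)
    (P : ℕ → Matrix (Fin K) (Fin K) ℝ)
    (hPzero : ∀ t, 1 ≤ t → ∀ μ ν : Fin K,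
      ¬ ((μ ∈ Ml E ∧ ν ∈ Nin E μ) ∨ (μ = ν ∧ μ ∈ Mu E)) → P t μ ν = 0)
    (hPnn : ∀ t, 1 ≤ t → ∀ μ ν : Fin K, 0 ≤ P t μ ν)
    (hPu : ∀ t, 1 ≤ t → ∀ μ ∈ Mu E, P t μ μ = 1)
    (hProw : ∀ t, 1 ≤ t → ∀ μ ∈ Ml E, ∑ ν ∈ Nin E μ, P t μ ν = 1)
    (hPα : ∀ t, 1 ≤ t → ∀ ν μ : Fin K, (ν, μ) ∈ E → α ≤ P t μ ν)
    (s : ℕ) (hs : K ≤ s) (u : Fin K) (hu : u ∈ Ml E) (hu' : u ∉ MlInf E) :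
    ∑ v ∈ (pathsTo E K u).filter (fun v => ∀ j : Fin K, v j.castSucc ∉ MlInf E),
        ∏ j : Fin K, P (s - K + 1 + (j : ℕ)) (v j.succ) (v j.castSucc)
      ≤ 1 - α ^ K := by
  classical
  have hrow : ∀ t, 1 ≤ t → ∀ μ : Fin K, ∑ ν, P t μ ν = 1 :=
    fun t ht μ => aux_rowsum E P hPzero hPu hProw t ht μ
  have hQ : ∀ j (μ : Fin K), ∑ ν, P (s - K + 1 + j) μ ν = 1 :=
    fun j μ => hrow _ (by omega) μ
  have htotal := aux_total_sum K (fun j => P (s - K + 1 + j)) hQ u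
  -- extract a source node reaching `u`
  have hν : ∃ ν ∈ Mu E, Relation.TransGen (EdgeRel E) ν u := by
    by_contra hcon
    push_neg at hcon
    apply hu'
    simp only [MlInf, Finset.mem_filter]
    exact ⟨hu, hcon⟩
  obtain ⟨ν, hνMu, htg⟩ := hν
  obtain ⟨L, hLK, w, hw0, hwL, hwe⟩ := aux_short_path E htg
  set v₀ : Fin (K+1) → Fin K := fun j => w ((j : ℕ) - (K - L)) with hv₀
  have hv₀app : ∀ m : Fin (K+1), v₀ m = w ((m : ℕ) - (K - L)) := fun m => by rw [hv₀]
  have hKL1 : 1 ≤ K - L := by omega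
  have hv₀last : v₀ (Fin.last K) = u := by
    rw [hv₀app, Fin.val_last, show K - (K - L) = L from by omega, hwL]
  have hνnotE : (ν, ν) ∉ E := by
    intro hmem
    have hmem' : ν ∈ Nin E ν := by simp [Nin, hmem]
    rw [aux_mem_Mu] at hνMu
    rw [hνMu] at hmem'
    exact absurd hmem' (Finset.notMem_empty ν)
  have hν1 : ∀ t, 1 ≤ t → P t ν ν = 1 := fun t ht => hPu t ht ν hνMu
  -- lower bound on the weight of v₀
  have hterm : α ^ K ≤ ∏ j : Fin K, P (s - K + 1 + (j : ℕ)) (v₀ j.succ) (v₀ j.castSucc) := by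
    have hle : ∏ _j : Fin K, α
        ≤ ∏ j : Fin K, P (s - K + 1 + (j : ℕ)) (v₀ j.succ) (v₀ j.castSucc) := by
      apply Finset.prod_le_prod (fun _ _ => le_of_lt hα0)
      intro j _
      have ht : 1 ≤ s - K + 1 + (j : ℕ) := by omega
      have hcs : v₀ j.castSucc = w ((j : ℕ) - (K - L)) := by
        rw [hv₀app, Fin.coe_castSucc]
      have hsc : v₀ j.succ = w ((j : ℕ) + 1 - (K - L)) := by
        rw [hv₀app, Fin.val_succ]
      by_cases hj : (j : ℕ) + 1 ≤ K - L
      · have h1 : (j : ℕ) - (K - L) = 0 := by omega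
        have h2 : (j : ℕ) + 1 - (K - L) = 0 := by omega
        rw [hcs, hsc, h1, h2, hw0, hν1 _ ht]
        exact le_of_lt hα1
      · have hm : (j : ℕ) + 1 - (K - L) = ((j : ℕ) - (K - L)) + 1 := by omega
        have hmL : (j : ℕ) - (K - L) < L := by
          have := j.isLt
          omega
        rw [hcs, hsc, hm]
        exact hPα _ ht _ _ (hwe _ hmL)
    calc α ^ K = ∏ _j : Fin K, α := by
          rw [Finset.prod_const, Finset.card_univ, Fintype.card_fin]
    _ ≤ _ := hle
  -- v₀ is not an E-path (its first step is the non-edge (ν, ν))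
  have hv₀notpath : v₀ ∉ pathsTo E K u := by
    intro hmem
    rw [pathsTo, Finset.mem_filter] at hmem
    obtain ⟨-, -, hedges⟩ := hmem
    have h0 := hedges ⟨0, hK⟩
    have hc : v₀ (Fin.castSucc ⟨0, hK⟩) = ν := by
      rw [hv₀app, Fin.coe_castSucc]
      simp [hw0]
    have hs' : v₀ (Fin.succ ⟨0, hK⟩) = ν := by
      rw [hv₀app, Fin.val_succ]
      show w (0 + 1 - (K - L)) = ν
      rw [Nat.zero_add, Nat.sub_eq_zero_of_le hKL1, hw0]
    rw [hc, hs'] at h0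
    exact hνnotE h0
  -- assemble
  set F := (pathsTo E K u).filter (fun v => ∀ j : Fin K, v j.castSucc ∉ MlInf E) with hF
  set T := Finset.univ.filter (fun v : Fin (K+1) → Fin K => v (Fin.last K) = u) with hT
  have hFT : F ⊆ T := by
    intro v hv
    rw [hF, Finset.mem_filter, pathsTo, Finset.mem_filter] at hv
    rw [hT, Finset.mem_filter]
    exact ⟨Finset.mem_univ _, hv.1.2.1⟩
  have hv₀T : v₀ ∈ T := by
    rw [hT, Finset.mem_filter]
    exact ⟨Finset.mem_univ _, hv₀last⟩
  have hv₀F : v₀ ∉ F := fun h => hv₀notpath (Finset.mem_filter.mp h).1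
  have hnonneg : ∀ v : Fin (K+1) → Fin K,
      0 ≤ ∏ j : Fin K, P (s - K + 1 + (j : ℕ)) (v j.succ) (v j.castSucc) :=
    fun v => Finset.prod_nonneg (fun j _ => hPnn _ (by omega) _ _)
  have hins : insert v₀ F ⊆ T := Finset.insert_subset hv₀T hFT
  have h1 : (∏ j : Fin K, P (s - K + 1 + (j : ℕ)) (v₀ j.succ) (v₀ j.castSucc))
      + ∑ v ∈ F, ∏ j : Fin K, P (s - K + 1 + (j : ℕ)) (v j.succ) (v j.castSucc) ≤ 1 := by
    have h2 : ∑ v ∈ insert v₀ F,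
        ∏ j : Fin K, P (s - K + 1 + (j : ℕ)) (v j.succ) (v j.castSucc) ≤ 1 := by
      calc ∑ v ∈ insert v₀ F, ∏ j : Fin K, P (s - K + 1 + (j : ℕ)) (v j.succ) (v j.castSucc)
          ≤ ∑ v ∈ T, ∏ j : Fin K, P (s - K + 1 + (j : ℕ)) (v j.succ) (v j.castSucc) :=
            Finset.sum_le_sum_of_subset_of_nonneg hins (fun v _ _ => hnonneg v)
      _ = 1 := htotal
    rwa [Finset.sum_insert hv₀F] at h2
  linarith [hterm]
end

section
/- Let d ≥ 1 be an integer, η ≥ 0, and for each integer t ≥ 1 and each edge (ν, μ) ∈ E let M_{t,μ,ν} be a real d×d matrix with ‖M_{t,μ,ν} − P_{t,μ,ν} I_d‖_op ≤ η. Then for every node μ ∈ M_l ∖ M_l^∞ and all integers t ≥ x ≥ 1, the sum over all E-paths v_1 → v_2 → ⋯ → v_x → μ of length x with v_1, …, v_x ∉ M_l^∞ of the products ‖M_{t,μ,v_x}‖_op · ‖M_{t−1,v_x,v_{x−1}}‖_op ⋯ ‖M_{t−x+1,v_2,v_1}‖_op is at most (1 + η/α)^K · ((1 + η/α)^K − α^K)^{⌊x/K⌋};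 in particular, the operator norm of the matrix ∑ M_{t,μ,v_x} M_{t−1,v_x,v_{x−1}} ⋯ M_{t−x+1,v_2,v_1}, summed over the same set of paths, is at most this bound. Moreover, for μ ∈ M_l^∞ no such path exists, so the corresponding matrix sum is the zero matrix. -/
open Matrix Finset Filter

noncomputable section

/-- The ordered product of matrices along a path: for a path `v : Fin (x+1) → Fin K`
(representing `v_1, …, v_{x+1}`), `pathProd M t x v = M_{t,v_{x+1},v_x} ⋯ M_{t−x+1,v_2,v_1}`. -/
def pathProd {K d : ℕ} (M : ℕ → Fin K → Fin K → Matrix (Fin d) (Fin d) ℝ) :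
    (t : ℕ) → (x : ℕ) → (Fin (x + 1) → Fin K) → Matrix (Fin d) (Fin d) ℝ
  | _, 0, _ => 1
  | t, x + 1, v =>
      M t (v (Fin.last (x + 1))) (v (Fin.last x).castSucc) *
        pathProd M (t - 1) x (fun i => v i.castSucc)

end


/- ======================= auxiliary lemmas ======================= -/

namespace S16

open scoped Matrix.Norms.L2Operator

/-! ### Operator norm lemmas -/

lemma opNorm_eq {m n : ℕ} (A : Matrix (Fin m) (Fin n) ℝ) : opNorm A = ‖A‖ := rfl

lemma opNorm_nonneg {m n : ℕ} (A : Matrix (Fin m) (Fin n) ℝ) : 0 ≤ opNorm A := by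
  rw [opNorm_eq]; exact norm_nonneg _

lemma opNorm_mul_le {d : ℕ} (A B : Matrix (Fin d) (Fin d) ℝ) :
    opNorm (A * B) ≤ opNorm A * opNorm B := by
  simp only [opNorm_eq]; exact norm_mul_le A B

lemma opNorm_sum_le {d : ℕ} {ι : Type*} (s : Finset ι) (f : ι → Matrix (Fin d) (Fin d) ℝ) :
    opNorm (∑ i ∈ s, f i) ≤ ∑ i ∈ s, opNorm (f i) := by
  simp only [opNorm_eq]; exact norm_sum_le s f

lemma opNorm_one {d : ℕ} (hd : 1 ≤ d) : opNorm (1 : Matrix (Fin d) (Fin d) ℝ) = 1 := by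
  haveI : Nonempty (Fin d) := ⟨⟨0, hd⟩⟩
  rw [opNorm_eq]; exact norm_one

lemma opNorm_bound {d : ℕ} (hd : 1 ≤ d) (A : Matrix (Fin d) (Fin d) ℝ) (c : ℝ) (hc : 0 ≤ c)
    (η : ℝ) (h : opNorm (A - c • (1 : Matrix (Fin d) (Fin d) ℝ)) ≤ η) : opNorm A ≤ η + c := by
  haveI : Nonempty (Fin d) := ⟨⟨0, hd⟩⟩
  rw [opNorm_eq] at *
  calc ‖A‖ = ‖A - c • 1 + c • 1‖ := by rw [sub_add_cancel]
  _ ≤ ‖A - c • 1‖ + ‖c • (1 : Matrix (Fin d) (Fin d) ℝ)‖ := norm_add_le _ _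
  _ ≤ η + c := by
      rw [norm_smul, norm_one]
      simp only [Real.norm_eq_abs, abs_of_nonneg hc, mul_one]
      exact add_le_add_left h _

/-! ### Graph lemmas -/

variable {K : ℕ} (E : Finset (Fin K × Fin K))

lemma mem_Nin {ν μ : Fin K} : ν ∈ Nin E μ ↔ (ν, μ) ∈ E := by simp [Nin]
lemma mem_Mu {μ : Fin K} : μ ∈ Mu E ↔ Nin E μ = ∅ := by simp [Mu]
lemma mem_Ml {μ : Fin K} : μ ∈ Ml E ↔ Nin E μ ≠ ∅ := by simp [Ml]
lemma mem_MlInf {μ : Fin K} :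
    μ ∈ MlInf E ↔ μ ∈ Ml E ∧ ∀ ν ∈ Mu E, ¬ Relation.TransGen (EdgeRel E) ν μ := by
  simp [MlInf]

lemma mlinf_closed {w μ : Fin K} (hμ : μ ∈ MlInf E) (hw : (w, μ) ∈ E) : w ∈ MlInf E := by
  rw [mem_MlInf] at hμ ⊢
  obtain ⟨h1, h2⟩ := hμ
  by_cases hwMu : w ∈ Mu E
  · exact absurd (Relation.TransGen.single hw) (h2 w hwMu)
  · refine ⟨?_, fun ν hν ht => h2 ν hν (ht.tail hw)⟩
    rw [mem_Ml]; rw [mem_Mu] at hwMu; exact hwMu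

lemma not_mlinf_reach {μ : Fin K} (h1 : μ ∈ Ml E) (h2 : μ ∉ MlInf E) :
    ∃ ν ∈ Mu E, Relation.TransGen (EdgeRel E) ν μ := by
  rw [mem_MlInf] at h2; push_neg at h2; exact h2 h1

/-- Iterated reachability sets from `M_u`. -/
def rSet : ℕ → Finset (Fin K)
  | 0 => Mu E
  | j + 1 => rSet j ∪ Finset.univ.filter (fun μ => ∃ ν ∈ rSet j, (ν, μ) ∈ E)

lemma rSet_subset_succ (j : ℕ) : rSet E j ⊆ rSet E (j + 1) := by
  intro a ha; rw [rSet]; exact Finset.mem_union_left _ ha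

lemma rSet_mono {m n : ℕ} (h : m ≤ n) : rSet E m ⊆ rSet E n := by
  induction n with
  | zero => simpa [Nat.le_zero.mp h]
  | succ n ih =>
    rcases Nat.lt_or_ge m (n + 1) with h' | h'
    · exact (ih (by omega)).trans (rSet_subset_succ E n)
    · have : m = n + 1 := by omega
      subst this; exact fun a ha => ha

lemma rSet_stab {j : ℕ} (h : rSet E (j + 1) = rSet E j) :
    ∀ n, rSet E (j + n) = rSet E j := by
  intro n; induction n with
  | zero => rfl
  | succ n ih =>
    have : j + (n + 1) = (j + n) + 1 := by omega
    rw [this, rSet, ih, ← rSet, h]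

lemma mem_rSet_of_trans {ν μ : Fin K} (hν : ν ∈ Mu E)
    (h : Relation.TransGen (EdgeRel E) ν μ) : ∃ m, μ ∈ rSet E m := by
  induction h with
  | single he => exact ⟨1, by rw [rSet]; exact Finset.mem_union_right _ (by
      simp only [Finset.mem_filter, Finset.mem_univ, true_and]; exact ⟨ν, hν, he⟩)⟩
  | tail _ he ih =>
    obtain ⟨m, hm⟩ := ih
    exact ⟨m + 1, by rw [rSet]; exact Finset.mem_union_right _ (by
      simp only [Finset.mem_filter, Finset.mem_univ, true_and]; exact ⟨_, hm, he⟩)⟩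

lemma rSet_all (hK : 1 ≤ K) (hMu : (Mu E).Nonempty) (m : ℕ) :
    rSet E m ⊆ rSet E (K - 1) := by
  by_cases hstab : ∃ j ≤ K - 1, rSet E (j + 1) = rSet E j
  · obtain ⟨j, hj, hstab⟩ := hstab
    have hall : ∀ n, j ≤ n → rSet E n = rSet E j := by
      intro n hn
      have := rSet_stab E hstab (n - j)
      rwa [Nat.add_sub_cancel' hn] at this
    rcases le_or_gt m (K - 1) with h | h
    · exact rSet_mono E h
    · rw [hall m (by omega), ← hall (K - 1) hj]
  · push_neg at hstab
    exfalso
    have hcard : ∀ j ≤ K, j + 1 ≤ (rSet E j).card := by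
      intro j hj
      induction j with
      | zero => simpa [rSet, Nat.succ_le_iff, Finset.card_pos]
      | succ j ih =>
        have h1 : j + 1 ≤ (rSet E j).card := ih (by omega)
        have hss : rSet E j ⊂ rSet E (j + 1) :=
          lt_of_le_of_ne (rSet_subset_succ E j) (Ne.symm (hstab j (by omega)))
        have := Finset.card_lt_card hss
        omega
    have := hcard K (le_refl K)
    have hle : (rSet E K).card ≤ K := by
      simpa using Finset.card_le_card (Finset.subset_univ (rSet E K))
    omega

lemma mem_rSet_final (hK : 1 ≤ K) {μ : Fin K} (h : μ ∉ MlInf E) : μ ∈ rSet E (K - 1) := by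
  by_cases hμ : μ ∈ Mu E
  · exact rSet_mono E (Nat.zero_le _) hμ
  · have hMl : μ ∈ Ml E := by
      rw [mem_Ml]; rw [mem_Mu] at hμ; exact hμ
    obtain ⟨ν, hν, ht⟩ := not_mlinf_reach E hMl h
    obtain ⟨m, hm⟩ := mem_rSet_of_trans E hν ht
    exact rSet_all E hK ⟨ν, hν⟩ m hm

/-! ### The discounted mass function `Fd` -/

variable (P : ℕ → Matrix (Fin K) (Fin K) ℝ)

/-- `Fd E P t a μ` : the `P`-mass of backward `a`-step paths from `μ` that do not end in `M_u`. -/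
def Fd : ℕ → ℕ → Fin K → ℝ
  | _, 0, μ => if Nin E μ = ∅ then 0 else 1
  | t, a + 1, μ => ∑ ν ∈ Nin E μ, P t μ ν * Fd (t - 1) a ν

variable {P}
variable (hPnn : ∀ t, 1 ≤ t → ∀ μ ν : Fin K, 0 ≤ P t μ ν)
variable (hProw : ∀ t, 1 ≤ t → ∀ μ ∈ Ml E, ∑ ν ∈ Nin E μ, P t μ ν = 1)

lemma Fd_mu {μ : Fin K} (hμ : Nin E μ = ∅) (a t : ℕ) : Fd E P t a μ = 0 := by
  cases a with
  | zero => rw [Fd, if_pos hμ]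
  | succ a => rw [Fd, hμ]; exact Finset.sum_empty

include hPnn in
lemma Fd_nonneg : ∀ a t μ, a ≤ t → 0 ≤ Fd E P t a μ := by
  intro a
  induction a with
  | zero => intro t μ _; rw [Fd]; split <;> norm_num
  | succ a ih =>
    intro t μ hat
    rw [Fd]
    exact Finset.sum_nonneg fun ν _ =>
      mul_nonneg (hPnn t (by omega) μ ν) (ih (t - 1) ν (by omega))

include hPnn hProw in
lemma Fd_le_one : ∀ a t μ, a ≤ t → Fd E P t a μ ≤ 1 := by
  intro a
  induction a with
  | zero => intro t μ _; rw [Fd]; split <;> norm_num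
  | succ a ih =>
    intro t μ hat
    rw [Fd]
    by_cases hμ : Nin E μ = ∅
    · rw [hμ, Finset.sum_empty]; norm_num
    · calc ∑ ν ∈ Nin E μ, P t μ ν * Fd E P (t - 1) a ν
          ≤ ∑ ν ∈ Nin E μ, P t μ ν * 1 := Finset.sum_le_sum fun ν _ =>
            mul_le_mul_of_nonneg_left (ih (t - 1) ν (by omega)) (hPnn t (by omega) μ ν)
      _ = 1 := by
          simp only [mul_one]
          exact hProw t (by omega) μ ((mem_Ml E).2 hμ)

include hPnn hProw in
lemma Fd_decay {α : ℝ} (hα0 : 0 < α) (hα1 : α ≤ 1)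
    (hPα : ∀ t, 1 ≤ t → ∀ ν μ : Fin K, (ν, μ) ∈ E → α ≤ P t μ ν) :
    ∀ j a t μ, j ≤ a → a ≤ t → μ ∈ rSet E j → Fd E P t a μ ≤ 1 - α ^ j := by
  intro j
  induction j with
  | zero =>
    intro a t μ _ hat hμ
    rw [rSet, mem_Mu] at hμ
    rw [Fd_mu E hμ]
    simp
  | succ j ih =>
    intro a t μ hja hat hμ
    have hαj : α ^ (j + 1) ≤ α ^ j := pow_le_pow_of_le_one hα0.le hα1 (by omega)
    rw [rSet, Finset.mem_union] at hμ
    rcases hμ with hμ | hμ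
    · have := ih a t μ (by omega) hat hμ
      linarith
    · simp only [Finset.mem_filter, Finset.mem_univ, true_and] at hμ
      obtain ⟨ν, hν, hedge⟩ := hμ
      obtain ⟨a', rfl⟩ : ∃ a', a = a' + 1 := ⟨a - 1, by omega⟩
      have hνNin : ν ∈ Nin E μ := (mem_Nin E).2 hedge
      have ht1 : (1 : ℕ) ≤ t := by omega
      rw [Fd, ← Finset.add_sum_erase _ _ hνNin]
      have h1 : P t μ ν * Fd E P (t - 1) a' ν ≤ P t μ ν * (1 - α ^ j) :=
        mul_le_mul_of_nonneg_left (ih a' (t - 1) ν (by omega) (by omega) hν)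
          (hPnn t ht1 μ ν)
      have h2 : ∑ w ∈ (Nin E μ).erase ν, P t μ w * Fd E P (t - 1) a' w ≤
          ∑ w ∈ (Nin E μ).erase ν, P t μ w := by
        refine Finset.sum_le_sum fun w hw => ?_
        have := Fd_le_one E hPnn hProw a' (t - 1) w (by omega)
        have hp := hPnn t ht1 μ w
        nlinarith
      have h3 : ∑ w ∈ (Nin E μ).erase ν, P t μ w = 1 - P t μ ν := by
        have := Finset.add_sum_erase _ (fun w => P t μ w) hνNin
        have hrow := hProw t ht1 μ ((mem_Ml E).2 (Finset.ne_empty_of_mem hνNin))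
        linarith
      have hPν : α ≤ P t μ ν := hPα t ht1 ν μ hedge
      have hαjn : 0 ≤ α ^ j := pow_nonneg hα0.le j
      have hmull : α * α ^ j ≤ P t μ ν * α ^ j := mul_le_mul_of_nonneg_right hPν hαjn
      rw [pow_succ]
      nlinarith

/-! ### Path sums -/

variable {d : ℕ}

/-- The sum, over restricted paths of length `x` ending at `μ`, of products of operator norms. -/
noncomputable def pathSum (M : ℕ → Fin K → Fin K → Matrix (Fin d) (Fin d) ℝ)
    (t x : ℕ) (μ : Fin K) : ℝ :=
  ∑ v ∈ (pathsTo E x μ).filter (fun v => ∀ i : Fin x, v i.castSucc ∉ MlInf E),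
    ∏ i : Fin x, opNorm (M (t - x + 1 + (i : ℕ)) (v i.succ) (v i.castSucc))

variable (M : ℕ → Fin K → Fin K → Matrix (Fin d) (Fin d) ℝ)

lemma pathSum_nonneg (t x : ℕ) (μ : Fin K) : 0 ≤ pathSum E M t x μ :=
  Finset.sum_nonneg fun v _ => Finset.prod_nonneg fun i _ => opNorm_nonneg _

lemma pathSum_zero (t : ℕ) (μ : Fin K) : pathSum E M t 0 μ = 1 := by
  rw [pathSum]
  have hset : (pathsTo E 0 μ).filter (fun v => ∀ i : Fin 0, v i.castSucc ∉ MlInf E) =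
      {fun _ => μ} := by
    ext v
    simp only [pathsTo, Finset.mem_filter, Finset.mem_univ, true_and, Finset.mem_singleton]
    constructor
    · rintro ⟨⟨h1, _⟩, _⟩
      funext i
      have h0 : i = Fin.last 0 := Fin.ext (by omega)
      rw [h0, h1]
    · rintro rfl
      exact ⟨⟨rfl, fun i => i.elim0⟩, fun i => i.elim0⟩
  rw [hset, Finset.sum_singleton]
  simp

lemma pathSum_succ (t x : ℕ) (μ : Fin K) (ht : x + 1 ≤ t) :
    pathSum E M t (x + 1) μ =
      ∑ ν ∈ (Nin E μ).filter (fun ν => ν ∉ MlInf E),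
        opNorm (M t μ ν) * pathSum E M (t - 1) x ν := by
  simp only [pathSum, Finset.mul_sum]
  rw [Finset.sum_sigma']
  refine Finset.sum_bij' (fun v _ => (⟨v (Fin.last x).castSucc, fun j => v j.castSucc⟩ :
      Σ _ : Fin K, Fin (x + 1) → Fin K)) (fun p _ => Fin.snoc p.2 μ) ?_ ?_ ?_ ?_ ?_
  · intro v hv
    simp only [pathsTo, Finset.mem_filter, Finset.mem_univ, true_and] at hv
    obtain ⟨⟨hlast, hedge⟩, hnot⟩ := hv
    simp only [Finset.mem_sigma, Finset.mem_filter, mem_Nin, Finset.mem_univ, true_and, pathsTo]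
    refine ⟨⟨?_, hnot (Fin.last x)⟩, (fun i => ?_), fun i => hnot i.castSucc⟩
    · have := hedge (Fin.last x)
      rwa [Fin.succ_last, hlast] at this
    · have := hedge i.castSucc
      rwa [Fin.succ_castSucc] at this
  · rintro ⟨ν, w⟩ hp
    simp only [Finset.mem_sigma, Finset.mem_filter, mem_Nin, pathsTo, Finset.mem_univ,
      true_and] at hp
    obtain ⟨⟨hν, hνn⟩, ⟨hwlast, hwedge⟩, hwnot⟩ := hp
    simp only [pathsTo, Finset.mem_filter, Finset.mem_univ, true_and]
    refine ⟨⟨Fin.snoc_last _ _, fun i => ?_⟩, fun i => ?_⟩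
    · refine Fin.lastCases ?_ (fun i' => ?_) i
      · rw [Fin.succ_last]
        rw [show ((Fin.last x).castSucc : Fin (x + 2)) = (Fin.last x).castSucc from rfl]
        rw [Fin.snoc_castSucc, Fin.snoc_last, hwlast]
        exact hν
      · rw [Fin.succ_castSucc, Fin.snoc_castSucc, Fin.snoc_castSucc]
        exact hwedge i'
    · refine Fin.lastCases ?_ (fun i' => ?_) i
      · rw [Fin.snoc_castSucc, hwlast]; exact hνn
      · rw [Fin.snoc_castSucc]; exact hwnot i'
  · intro v hv
    simp only [pathsTo, Finset.mem_filter, Finset.mem_univ, true_and] at hv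
    funext i
    dsimp only
    refine Fin.lastCases ?_ (fun i' => ?_) i
    · rw [Fin.snoc_last, hv.1.1]
    · rw [Fin.snoc_castSucc]
  · rintro ⟨ν, w⟩ hp
    simp only [Finset.mem_sigma, Finset.mem_filter, mem_Nin, pathsTo, Finset.mem_univ,
      true_and] at hp
    refine Sigma.ext ?_ (heq_of_eq ?_)
    · simp only [Fin.snoc_castSucc]
      exact hp.2.1.1
    · funext j
      simp only [Fin.snoc_castSucc]
  · intro v hv
    simp only [pathsTo, Finset.mem_filter, Finset.mem_univ, true_and] at hv
    rw [Fin.prod_univ_castSucc, mul_comm]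
    have e1 : t - (x + 1) + 1 + ((Fin.last x : Fin (x + 1)) : ℕ) = t := by
      rw [Fin.val_last]; omega
    rw [e1, Fin.succ_last, hv.1.1]
    refine congrArg₂ (· * ·) rfl ?_
    refine Finset.prod_congr rfl fun i _ => ?_
    have e2 : t - (x + 1) + 1 + ((i.castSucc : Fin (x + 1)) : ℕ) = t - 1 - x + 1 + (i : ℕ) := by
      rw [Fin.coe_castSucc]; omega
    rw [e2, Fin.succ_castSucc]

/-- Operator norm of a path product is at most the product of the operator norms. -/
lemma opNorm_pathProd (hd : 1 ≤ d) :
    ∀ x t (v : Fin (x + 1) → Fin K), x ≤ t →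
      opNorm (pathProd M t x v) ≤
        ∏ i : Fin x, opNorm (M (t - x + 1 + (i : ℕ)) (v i.succ) (v i.castSucc)) := by
  intro x
  induction x with
  | zero =>
    intro t v _
    rw [pathProd]
    simp [opNorm_one hd]
  | succ x ih =>
    intro t v htx
    rw [pathProd, Fin.prod_univ_castSucc]
    have e1 : t - (x + 1) + 1 + ((Fin.last x : Fin (x + 1)) : ℕ) = t := by
      rw [Fin.val_last]; omega
    rw [e1, show ((Fin.last x).succ : Fin (x + 2)) = Fin.last (x + 1) from rfl, mul_comm]
    refine le_trans (opNorm_mul_le _ _) ?_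
    refine mul_le_mul_of_nonneg_left (le_trans (ih (t - 1) _ (by omega)) (le_of_eq ?_))
      (opNorm_nonneg _)
    refine Finset.prod_congr rfl fun i _ => ?_
    have e2 : t - 1 - x + 1 + (i : ℕ) = t - (x + 1) + 1 + ((i.castSucc : Fin (x + 1)) : ℕ) := by
      rw [Fin.coe_castSucc]; omega
    rw [e2, Fin.succ_castSucc]

/-! ### The main estimates -/

variable {β : ℝ}
variable (hβ1 : 1 ≤ β)
variable (hMβ : ∀ t, 1 ≤ t → ∀ ν μ : Fin K, (ν, μ) ∈ E → opNorm (M t μ ν) ≤ β * P t μ ν)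

include hβ1 hMβ hPnn hProw in
lemma pathSum_le_pow : ∀ x t μ, x ≤ t → pathSum E M t x μ ≤ β ^ x := by
  intro x
  induction x with
  | zero => intro t μ _; rw [pathSum_zero, pow_zero]
  | succ x ih =>
    intro t μ hxt
    have ht1 : (1 : ℕ) ≤ t := by omega
    have hβ0 : (0 : ℝ) ≤ β := by linarith
    rw [pathSum_succ E M t x μ hxt]
    by_cases hN : Nin E μ = ∅
    · rw [hN]
      simp only [Finset.filter_empty, Finset.sum_empty]
      positivity
    · calc ∑ ν ∈ (Nin E μ).filter (fun ν => ν ∉ MlInf E),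
            opNorm (M t μ ν) * pathSum E M (t - 1) x ν
          ≤ ∑ ν ∈ (Nin E μ).filter (fun ν => ν ∉ MlInf E), (β * P t μ ν) * β ^ x := by
            refine Finset.sum_le_sum fun ν hν => ?_
            have hedge : (ν, μ) ∈ E := (mem_Nin E).1 (Finset.mem_of_mem_filter ν hν)
            exact mul_le_mul (hMβ t ht1 ν μ hedge) (ih (t - 1) ν (by omega))
              (pathSum_nonneg E M _ _ _) (mul_nonneg hβ0 (hPnn t ht1 μ ν))
      _ ≤ ∑ ν ∈ Nin E μ, (β * P t μ ν) * β ^ x :=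
            Finset.sum_le_sum_of_subset_of_nonneg (Finset.filter_subset _ _) fun ν hν _ =>
              mul_nonneg (mul_nonneg hβ0 (hPnn t ht1 μ ν)) (pow_nonneg hβ0 x)
      _ = β * (∑ ν ∈ Nin E μ, P t μ ν) * β ^ x := by
            rw [← Finset.sum_mul, ← Finset.mul_sum]
      _ = β ^ (x + 1) := by
            rw [hProw t ht1 μ ((mem_Ml E).2 hN), mul_one, pow_succ, mul_comm]

include hβ1 hMβ hPnn in
lemma keyU : ∀ a t x μ (C : ℝ), 0 ≤ C → a + 1 ≤ x → x ≤ t →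
    (∀ ν, ν ∉ MlInf E → pathSum E M (t - a) (x - a) ν ≤ C) → μ ∉ MlInf E →
    pathSum E M t x μ ≤ C * β ^ a * Fd E P t a μ := by
  intro a
  induction a with
  | zero =>
    intro t x μ C hC hax hxt hyp hμ
    simp only [Nat.sub_zero] at hyp
    by_cases hN : Nin E μ = ∅
    · obtain ⟨x', rfl⟩ : ∃ x', x = x' + 1 := ⟨x - 1, by omega⟩
      rw [pathSum_succ E M t x' μ hxt, hN]
      rw [show Fd E P t 0 μ = 0 from by rw [Fd, if_pos hN]]
      simp
    · rw [show Fd E P t 0 μ = 1 from by rw [Fd, if_neg hN], pow_zero]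
      simpa using hyp μ hμ
  | succ a ih =>
    intro t x μ C hC hax hxt hyp hμ
    obtain ⟨x', rfl⟩ : ∃ x', x = x' + 1 := ⟨x - 1, by omega⟩
    have ht1 : (1 : ℕ) ≤ t := by omega
    have hβ0 : (0 : ℝ) ≤ β := by linarith
    rw [pathSum_succ E M t x' μ hxt]
    calc ∑ ν ∈ (Nin E μ).filter (fun ν => ν ∉ MlInf E),
            opNorm (M t μ ν) * pathSum E M (t - 1) x' ν
        ≤ ∑ ν ∈ (Nin E μ).filter (fun ν => ν ∉ MlInf E),
            (β * P t μ ν) * (C * β ^ a * Fd E P (t - 1) a ν) := by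
          refine Finset.sum_le_sum fun ν hν => ?_
          simp only [Finset.mem_filter] at hν
          have hedge : (ν, μ) ∈ E := (mem_Nin E).1 hν.1
          refine mul_le_mul (hMβ t ht1 ν μ hedge) ?_ (pathSum_nonneg E M _ _ _)
            (mul_nonneg hβ0 (hPnn t ht1 μ ν))
          refine ih (t - 1) x' ν C hC (by omega) (by omega) ?_ hν.2
          intro w hw
          have h := hyp w hw
          rwa [show t - 1 - a = t - (a + 1) from by omega,
            show x' - a = x' + 1 - (a + 1) from by omega]
      _ ≤ ∑ ν ∈ Nin E μ, (β * P t μ ν) * (C * β ^ a * Fd E P (t - 1) a ν) :=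
          Finset.sum_le_sum_of_subset_of_nonneg (Finset.filter_subset _ _) fun ν hν _ =>
            mul_nonneg (mul_nonneg hβ0 (hPnn t ht1 μ ν))
              (mul_nonneg (mul_nonneg hC (pow_nonneg hβ0 a))
                (Fd_nonneg E hPnn a (t - 1) ν (by omega)))
      _ = C * β ^ (a + 1) * ∑ ν ∈ Nin E μ, P t μ ν * Fd E P (t - 1) a ν := by
          rw [Finset.mul_sum]
          refine Finset.sum_congr rfl fun ν _ => by ring
      _ = C * β ^ (a + 1) * Fd E P t (a + 1) μ := by rw [Fd]

include hβ1 hMβ hPnn hProw in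
lemma mainBound (hK : 1 ≤ K) {α : ℝ} (hα0 : 0 < α) (hα1 : α ≤ 1)
    (hPα : ∀ t, 1 ≤ t → ∀ ν μ : Fin K, (ν, μ) ∈ E → α ≤ P t μ ν) :
    ∀ x t μ, x ≤ t → μ ∉ MlInf E →
      pathSum E M t x μ ≤ β ^ K * (β ^ K - α ^ K) ^ (x / K) := by
  have hβ0 : (0 : ℝ) ≤ β := by linarith
  have hβK : 1 ≤ β ^ K := one_le_pow₀ hβ1
  intro x
  induction x using Nat.strong_induction_on with
  | _ x IH =>
    intro t μ hxt hμ
    have hαβ : α ^ K ≤ β ^ K := pow_le_pow_left₀ hα0.le (le_trans hα1 hβ1) K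
    have hsub0 : (0 : ℝ) ≤ β ^ K - α ^ K := by linarith
    have hkey : β ^ K * (1 - α ^ (K - 1)) ≤ β ^ K - α ^ K := by
      have e : α ^ K = α ^ (K - 1) * α := by
        rw [← pow_succ, show K - 1 + 1 = K from by omega]
      have h1 : (0 : ℝ) ≤ α ^ (K - 1) := pow_nonneg hα0.le _
      nlinarith
    rcases Nat.lt_or_ge x K with hx | hx
    · rw [Nat.div_eq_of_lt hx, pow_zero, mul_one]
      exact le_trans (pathSum_le_pow E hPnn hProw M hβ1 hMβ x t μ hxt)
        (pow_le_pow_right₀ hβ1 hx.le)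
    · rcases Nat.eq_or_lt_of_le hx with hx' | hx'
      · -- x = K
        subst hx'
        rw [Nat.div_self (by omega : 0 < K), pow_one]
        have hU := keyU E hPnn M hβ1 hMβ (K - 1) t K μ β hβ0 (by omega) hxt
          (fun ν hν => by
            have h := pathSum_le_pow E hPnn hProw M hβ1 hMβ 1 (t - (K - 1)) ν (by omega)
            rw [pow_one] at h
            rw [show K - (K - 1) = 1 from by omega]
            exact h) hμ
        have hFd := Fd_decay E hPnn hProw hα0 hα1 hPα (K - 1) (K - 1) t μ le_rfl (by omega)
          (mem_rSet_final E hK hμ)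
        calc pathSum E M t K μ ≤ β * β ^ (K - 1) * Fd E P t (K - 1) μ := hU
          _ ≤ β * β ^ (K - 1) * (1 - α ^ (K - 1)) := by
              refine mul_le_mul_of_nonneg_left hFd ?_
              positivity
          _ = β ^ K * (1 - α ^ (K - 1)) := by
              rw [← pow_succ', show K - 1 + 1 = K from by omega]
          _ ≤ β ^ K - α ^ K := hkey
          _ ≤ β ^ K * (β ^ K - α ^ K) := by nlinarith
      · -- x > K
        have hdiv : x / K = (x - K) / K + 1 := Nat.div_eq_sub_div (by omega) (by omega)
        set C := β ^ K * (β ^ K - α ^ K) ^ ((x - K) / K) with hCdef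
        have hC0 : 0 ≤ C := mul_nonneg (by positivity) (pow_nonneg hsub0 _)
        have hU := keyU E hPnn M hβ1 hMβ K t x μ C hC0 (by omega) hxt
          (fun ν hν => IH (x - K) (by omega) (t - K) ν (by omega) hν) hμ
        have hFd := Fd_decay E hPnn hProw hα0 hα1 hPα (K - 1) K t μ (by omega) (by omega)
          (mem_rSet_final E hK hμ)
        calc pathSum E M t x μ ≤ C * β ^ K * Fd E P t K μ := hU
          _ ≤ C * β ^ K * (1 - α ^ (K - 1)) := by
              refine mul_le_mul_of_nonneg_left hFd ?_
              positivity
          _ = C * (β ^ K * (1 - α ^ (K - 1))) := by ring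
          _ ≤ C * (β ^ K - α ^ K) := mul_le_mul_of_nonneg_left hkey hC0
          _ = β ^ K * (β ^ K - α ^ K) ^ (x / K) := by
              rw [hdiv, pow_succ, hCdef]; ring

end S16

/-- Let `M_{t,μ,ν}` be `d×d` matrices with `‖M_{t,μ,ν} − P_{t,μ,ν}·I_d‖_op ≤ η`
for every edge `(ν,μ) ∈ E`. Then for every `μ ∈ M_l ∖ M_l^∞` and all `t ≥ x ≥ 1`, the sum over
`E`-paths `v_1 → ⋯ → v_x → μ` with `v_1,…,v_x ∉ M_l^∞` of the products of operator norms
`‖M_{t,μ,v_x}‖ ⋯ ‖M_{t−x+1,v_2,v_1}‖` is at most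
`(1 + η/α)^K · ((1 + η/α)^K − α^K)^{⌊x/K⌋}`; in particular the operator norm of the sum of
the corresponding matrix products is at most this bound. Moreover, for `μ ∈ M_l^∞` the
corresponding matrix sum is the zero matrix. -/
theorem stmt16
    {K : ℕ} (hK : 1 ≤ K)
    (E : Finset (Fin K × Fin K))
    (α : ℝ) (hα0 : 0 < α) (hα1 : α < 1)
    (P : ℕ → Matrix (Fin K) (Fin K) ℝ)
    (hPzero : ∀ t, 1 ≤ t → ∀ μ ν : Fin K,
      ¬ ((μ ∈ Ml E ∧ ν ∈ Nin E μ) ∨ (μ = ν ∧ μ ∈ Mu E)) → P t μ ν = 0)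
    (hPnn : ∀ t, 1 ≤ t → ∀ μ ν : Fin K, 0 ≤ P t μ ν)
    (hPu : ∀ t, 1 ≤ t → ∀ μ ∈ Mu E, P t μ μ = 1)
    (hProw : ∀ t, 1 ≤ t → ∀ μ ∈ Ml E, ∑ ν ∈ Nin E μ, P t μ ν = 1)
    (hPα : ∀ t, 1 ≤ t → ∀ ν μ : Fin K, (ν, μ) ∈ E → α ≤ P t μ ν)
    {d : ℕ} (hd : 1 ≤ d) (η : ℝ) (hη : 0 ≤ η)
    (M : ℕ → Fin K → Fin K → Matrix (Fin d) (Fin d) ℝ)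
    (hM : ∀ t, 1 ≤ t → ∀ ν μ : Fin K, (ν, μ) ∈ E →
      opNorm (M t μ ν - P t μ ν • (1 : Matrix (Fin d) (Fin d) ℝ)) ≤ η) :
    (∀ μ ∈ Ml E, μ ∉ MlInf E → ∀ t x : ℕ, 1 ≤ x → x ≤ t →
      (∑ v ∈ (pathsTo E x μ).filter (fun v => ∀ i : Fin x, v i.castSucc ∉ MlInf E),
          ∏ i : Fin x, opNorm (M (t - x + 1 + (i : ℕ)) (v i.succ) (v i.castSucc)) ≤
        (1 + η / α) ^ K * ((1 + η / α) ^ K - α ^ K) ^ (x / K)) ∧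
      opNorm (∑ v ∈ (pathsTo E x μ).filter (fun v => ∀ i : Fin x, v i.castSucc ∉ MlInf E),
          pathProd M t x v) ≤
        (1 + η / α) ^ K * ((1 + η / α) ^ K - α ^ K) ^ (x / K)) ∧
    (∀ μ ∈ MlInf E, ∀ t x : ℕ, 1 ≤ x → x ≤ t →
      ∑ v ∈ (pathsTo E x μ).filter (fun v => ∀ i : Fin x, v i.castSucc ∉ MlInf E),
        pathProd M t x v = 0) := by
  classical
  set β : ℝ := 1 + η / α with hβdef
  have hβ1 : 1 ≤ β := by
    have : 0 ≤ η / α := div_nonneg hη hα0.le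
    simp only [hβdef]; linarith
  have hMβ : ∀ t, 1 ≤ t → ∀ ν μ : Fin K, (ν, μ) ∈ E →
      opNorm (M t μ ν) ≤ β * P t μ ν := by
    intro t ht ν μ hedge
    have h1 : opNorm (M t μ ν) ≤ η + P t μ ν :=
      S16.opNorm_bound hd (M t μ ν) (P t μ ν) (hPnn t ht μ ν) η (hM t ht ν μ hedge)
    have h2 : η / α * α ≤ η / α * P t μ ν :=
      mul_le_mul_of_nonneg_left (hPα t ht ν μ hedge) (div_nonneg hη hα0.le)
    have h3 : η / α * α = η := div_mul_cancel₀ η hα0.ne'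
    have : η + P t μ ν ≤ β * P t μ ν := by
      simp only [hβdef]; nlinarith
    linarith
  have hmain := S16.mainBound E hPnn hProw M hβ1 hMβ hK hα0 hα1.le hPα
  constructor
  · intro μ hμMl hμ t x hx1 hxt
    have h1 : S16.pathSum E M t x μ ≤ β ^ K * (β ^ K - α ^ K) ^ (x / K) :=
      hmain x t μ hxt hμ
    constructor
    · exact h1
    · refine le_trans (S16.opNorm_sum_le _ _) (le_trans ?_ h1)
      rw [S16.pathSum]
      exact Finset.sum_le_sum fun v _ => S16.opNorm_pathProd M hd x t v hxt
  · intro μ hμ t x hx1 hxt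
    obtain ⟨x', rfl⟩ : ∃ x', x = x' + 1 := ⟨x - 1, by omega⟩
    have hempty : (pathsTo E (x' + 1) μ).filter
        (fun v => ∀ i : Fin (x' + 1), v i.castSucc ∉ MlInf E) = ∅ := by
      refine Finset.eq_empty_of_forall_notMem fun v hv => ?_
      simp only [pathsTo, Finset.mem_filter, Finset.mem_univ, true_and] at hv
      obtain ⟨⟨hlast, hedge⟩, hnot⟩ := hv
      have he := hedge (Fin.last x')
      rw [Fin.succ_last, hlast] at he
      exact hnot (Fin.last x') (S16.mlinf_closed E hμ he)
    rw [hempty, Finset.sum_empty]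
end

section
/- Let d ≥ 1 be an integer and η ≥ 0. For each integer t ≥ 1, each μ ∈ M_l and each ν ∈ Nin(μ), let M_{t,μ,ν} be a real d×d matrix such that ∑_{ν∈Nin(μ)} M_{t,μ,ν} = I_d for every μ ∈ M_l and ‖M_{t,μ,ν} − P_{t,μ,ν} I_d‖_op ≤ η for every edge (ν, μ) ∈ E. For x ≥ 1, 0 ≤ ℓ ≤ x and v ∈ M_l^∞, let L_{x,ℓ,v}(μ) denote the set of E-paths v_1 → v_2 → ⋯ → v_x → μ of length x ending at μ with v_{x−ℓ+1} = v and with v_{x−ℓ+2}, …, v_x, μ all not in M_l^∞ (for ℓ = 0 this reads μ = v ∈ M_l^∞ with no further constraint). Set c₁ = (1 + η/α)(1 − α^K)^{1/K} and c₂ = α^K − K·η/(α·(1 − α^K)^{1/K+1}·(1 − c₁)²), and assume c₁ ∈ (0,1). Then for every μ ∈ M_l^c and every integer t ≥ K: ‖ ∑_{x=1}^{t} ∑_{v∈M_l^∞} ∑_{ℓ=0}^{x} ∑_{paths in L_{x,ℓ,v}(μ)} M_{t,μ,v_x} M_{t−1,v_x,v_{x−1}} ⋯ M_{t−x+1,v_2,v_1}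 ‖_op ≥ t·c₂ − α^K·(K − 1). Moreover, for every μ ∈ M_l^nc the corresponding sum of matrix products is the zero matrix. -/
set_option maxHeartbeats 2000000


open Matrix Finset Filter

noncomputable section
open scoped Matrix.Norms.L2Operator
namespace S17

lemma opNorm_eq {m n : ℕ} (A : Matrix (Fin m) (Fin n) ℝ) : opNorm A = ‖A‖ := rfl

lemma norm_one_mat {d : ℕ} (hd : 1 ≤ d) : ‖(1 : Matrix (Fin d) (Fin d) ℝ)‖ = 1 := by
  haveI : Nonempty (Fin d) := ⟨⟨0, hd⟩⟩
  haveI : Nontrivial (EuclideanSpace ℝ (Fin d)) := inferInstance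
  rw [Matrix.cstar_norm_def]
  have h1 : (toEuclideanCLM (n := Fin d) (𝕜 := ℝ) (1 : Matrix (Fin d) (Fin d) ℝ)) = 1 :=
    _root_.map_one _
  rw [h1]
  exact norm_one
variable {K : ℕ} (E : Finset (Fin K × Fin K))

lemma mem_Nin {a μ : Fin K} : a ∈ Nin E μ ↔ (a, μ) ∈ E := by simp [Nin]

lemma mem_Ml_of_edge {a μ : Fin K} (h : (a, μ) ∈ E) : μ ∈ Ml E := by
  simp only [Ml, Finset.mem_filter, Finset.mem_univ, true_and]
  exact fun hne => by simpa [hne] using (mem_Nin E).2 h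

lemma ml_or_mu (μ : Fin K) : μ ∈ Ml E ∨ μ ∈ Mu E := by
  by_cases h : Nin E μ = ∅
  · exact Or.inr (by simp [Mu, h])
  · exact Or.inl (by simp [Ml, h])

lemma MlInf_subset_Ml : MlInf E ⊆ Ml E := by
  classical
  intro x hx; exact Finset.mem_of_mem_filter _ hx
lemma Mlc_subset_Ml : Mlc E ⊆ Ml E := by
  classical
  intro x hx; exact Finset.mem_of_mem_filter _ hx

lemma MlInf_subset_Mlc : MlInf E ⊆ Mlc E := by
  intro μ hμ
  simp only [Mlc, Finset.mem_filter]
  exact ⟨MlInf_subset_Ml E hμ, Or.inl hμ⟩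

lemma nin_MlInf {a μ : Fin K} (hμ : μ ∈ MlInf E) (ha : a ∈ Nin E μ) : a ∈ MlInf E := by
  simp only [MlInf, Finset.mem_filter] at hμ ⊢
  have hedge : EdgeRel E a μ := (mem_Nin E).1 ha
  constructor
  · rcases ml_or_mu E a with h | h
    · exact h
    · exact absurd (Relation.TransGen.single hedge) (hμ.2 a h)
  · intro ν hν htg
    exact hμ.2 ν hν (htg.tail hedge)

lemma Mlc_of_edge {a μ : Fin K} (ha : a ∈ Mlc E) (h : (a, μ) ∈ E) : μ ∈ Mlc E := by
  simp only [Mlc, Finset.mem_filter] at ha ⊢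
  refine ⟨mem_Ml_of_edge E h, Or.inr ?_⟩
  rcases ha.2 with h1 | ⟨ν, hν, htg⟩
  · exact ⟨a, h1, Relation.TransGen.single h⟩
  · exact ⟨ν, hν, htg.tail h⟩

lemma MlInf_nonempty_of_Mlc {μ : Fin K} (hμ : μ ∈ Mlc E) : (MlInf E).Nonempty := by
  simp only [Mlc, Finset.mem_filter] at hμ
  rcases hμ.2 with h | ⟨ν, hν, _⟩
  · exact ⟨μ, h⟩
  · exact ⟨ν, hν⟩

/-- Reachability layers from `MlInf`. -/
def Rlay : ℕ → Finset (Fin K)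
  | 0 => MlInf E
  | n + 1 => Rlay n ∪ Finset.univ.filter (fun μ => ∃ a ∈ Rlay n, (a, μ) ∈ E)

lemma Rlay_subset_succ (n : ℕ) : Rlay E n ⊆ Rlay E (n + 1) := by
  simp [Rlay]

lemma Rlay_subset {m n : ℕ} (h : m ≤ n) : Rlay E m ⊆ Rlay E n := by
  induction n with
  | zero => simpa [Nat.le_zero.1 h]
  | succ n ih =>
    rcases Nat.lt_or_ge m (n+1) with h' | h'
    · exact (ih (Nat.lt_succ_iff.1 h')).trans (Rlay_subset_succ E n)
    · have : m = n + 1 := le_antisymm h h'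
      simp [this]

lemma Rlay_stab {n : ℕ} (h : Rlay E (n + 1) = Rlay E n) : ∀ m, Rlay E (n + m) = Rlay E n := by
  intro m
  induction m with
  | zero => rfl
  | succ m ih =>
    have e1 : Rlay E ((n + m) + 1) = Rlay E (n + m) ∪
        Finset.univ.filter (fun μ => ∃ a ∈ Rlay E (n + m), (a, μ) ∈ E) := rfl
    have e2 : Rlay E (n + 1) = Rlay E n ∪
        Finset.univ.filter (fun μ => ∃ a ∈ Rlay E n, (a, μ) ∈ E) := rfl
    show Rlay E ((n + m) + 1) = Rlay E n
    rw [e1, ih, ← e2, h]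

lemma Rlay_cases {n : ℕ} {μ : Fin K} (h : μ ∈ Rlay E n) :
    μ ∈ MlInf E ∨ ∃ m, m + 1 ≤ n ∧ ∃ a ∈ Rlay E m, (a, μ) ∈ E := by
  induction n with
  | zero => exact Or.inl h
  | succ n ih =>
    rcases Finset.mem_union.1 h with h' | h'
    · rcases ih h' with h1 | ⟨m, hm, ha⟩
      · exact Or.inl h1
      · exact Or.inr ⟨m, hm.trans (Nat.le_succ n), ha⟩
    · simp only [Finset.mem_filter, Finset.mem_univ, true_and] at h'
      exact Or.inr ⟨n, le_refl _, h'⟩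


lemma Rlay_card {n : ℕ} (h : ∀ m < n, Rlay E (m + 1) ≠ Rlay E m) :
    (Rlay E 0).card + n ≤ (Rlay E n).card := by
  induction n with
  | zero => simp
  | succ n ih =>
    have h1 : (Rlay E 0).card + n ≤ (Rlay E n).card :=
      ih (fun m hm => h m (hm.trans (Nat.lt_succ_self n)))
    have h2 : Rlay E n ⊂ Rlay E (n + 1) :=
      (Finset.ssubset_iff_of_subset (Rlay_subset_succ E n)).2 (by
        rcases Finset.exists_of_ssubset (lt_of_le_of_ne (Rlay_subset_succ E n)
          (fun he => h n (Nat.lt_succ_self n) he.symm)) with ⟨x, hx1, hx2⟩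
        exact ⟨x, hx1, hx2⟩)
    have := Finset.card_lt_card h2
    omega

lemma exists_Rlay_stab (hK : 1 ≤ K) (hne : (MlInf E).Nonempty) :
    ∃ m < K, Rlay E (m + 1) = Rlay E m := by
  by_contra hcon
  push_neg at hcon
  have h0 : 1 ≤ (Rlay E 0).card := Finset.card_pos.2 hne
  have := Rlay_card E (n := K) hcon
  have hle : (Rlay E K).card ≤ K := by
    simpa using Finset.card_le_univ (Rlay E K)
  omega

lemma mem_Rlay_of_TransGen {v μ : Fin K} (hv : v ∈ MlInf E)
    (h : Relation.TransGen (EdgeRel E) v μ) : ∃ n, μ ∈ Rlay E n := by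
  induction h with
  | single he =>
    exact ⟨1, Finset.mem_union_right _ (by
      simp only [Finset.mem_filter, Finset.mem_univ, true_and]
      exact ⟨v, hv, he⟩)⟩
  | tail _ he ih =>
    rcases ih with ⟨n, hn⟩
    exact ⟨n + 1, Finset.mem_union_right _ (by
      simp only [Finset.mem_filter, Finset.mem_univ, true_and]
      exact ⟨_, hn, he⟩)⟩

lemma Mlc_subset_Rlay (hK : 1 ≤ K) : Mlc E ⊆ Rlay E (K - 1) := by
  intro μ hμ
  obtain ⟨m, hmK, hstab⟩ := exists_Rlay_stab E hK (MlInf_nonempty_of_Mlc E hμ)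
  have hall : ∀ n, Rlay E n ⊆ Rlay E (K - 1) := by
    intro n
    rcases Nat.le_total n (K - 1) with h | h
    · exact Rlay_subset E h
    · have hm1 : m ≤ K - 1 := by omega
      have e1 : Rlay E n = Rlay E m := by
        have : n = m + (n - m) := by omega
        rw [this]; exact Rlay_stab E hstab _
      rw [e1]
      exact Rlay_subset E hm1
  have hμ' := hμ
  simp only [Mlc, Finset.mem_filter] at hμ'
  rcases hμ'.2 with h | ⟨ν, hν, htg⟩
  · exact hall 0 h
  · rcases mem_Rlay_of_TransGen E hν htg with ⟨n, hn⟩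
    exact hall n hn

/-- Paths of length `L` indexed by `ℕ`. -/
def PathLen (v μ : Fin K) (L : ℕ) : Prop :=
  ∃ f : ℕ → Fin K, f 0 = v ∧ f L = μ ∧ ∀ i < L, (f i, f (i + 1)) ∈ E

lemma Rlay_path {n : ℕ} {μ : Fin K} (h : μ ∈ Rlay E n) :
    ∃ L ≤ n, ∃ v ∈ MlInf E, PathLen E v μ L := by
  induction n generalizing μ with
  | zero =>
    exact ⟨0, le_refl _, μ, h, fun _ => μ, rfl, rfl, by omega⟩
  | succ n ih =>
    rcases Finset.mem_union.1 h with h' | h'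
    · rcases ih h' with ⟨L, hL, hrest⟩
      exact ⟨L, hL.trans (Nat.le_succ n), hrest⟩
    · simp only [Finset.mem_filter, Finset.mem_univ, true_and] at h'
      rcases h' with ⟨a, ha, hedge⟩
      rcases ih ha with ⟨L, hL, v, hv, f, hf0, hfL, hfe⟩
      refine ⟨L + 1, by omega, v, hv, fun i => if i ≤ L then f i else μ, ?_, ?_, ?_⟩
      · simp [hf0]
      · simp
      · intro i hi
        rcases Nat.lt_or_ge i L with h1 | h1
        · simpa [Nat.le_of_lt h1, Nat.succ_le_of_lt h1] using hfe i h1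
        · have : i = L := by omega
          subst this
          simpa [hfL] using hedge


def Bset : Finset (Fin K) := Mlc E \ MlInf E

lemma Bset_subset_Mlc : Bset E ⊆ Mlc E := Finset.sdiff_subset

lemma path_desc {x : ℕ} {w : Fin (x + 1) → Fin K}
    (hedge : ∀ i : Fin x, (w i.castSucc, w i.succ) ∈ E) :
    ∀ n (h : n < x + 1), w ⟨n, h⟩ ∈ MlInf E → w 0 ∈ MlInf E := by
  intro n
  induction n with
  | zero => intro h hm; exact hm
  | succ n ih =>
    intro h hm
    have hn : n < x := by omega
    have he : (w ⟨n, by omega⟩, w ⟨n + 1, h⟩) ∈ E := hedge ⟨n, hn⟩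
    have : w ⟨n, by omega⟩ ∈ MlInf E := nin_MlInf E hm ((mem_Nin E).2 he)
    exact ih (by omega) this

lemma path_asc {x : ℕ} {w : Fin (x + 1) → Fin K}
    (hedge : ∀ i : Fin x, (w i.castSucc, w i.succ) ∈ E) :
    ∀ n (hn : n < x + 1) m (hm : m < n),
      Relation.TransGen (EdgeRel E) (w ⟨m, by omega⟩) (w ⟨n, hn⟩) := by
  intro n
  induction n with
  | zero => intro hn m hm; omega
  | succ n ih =>
    intro hn m hm
    have hnx : n < x := by omega
    have he : EdgeRel E (w ⟨n, by omega⟩) (w ⟨n + 1, hn⟩) := hedge ⟨n, hnx⟩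
    rcases Nat.lt_or_ge m n with h1 | h1
    · exact (ih (by omega) m h1).tail he
    · have : m = n := by omega
      subst this
      exact Relation.TransGen.single he

variable (P : ℕ → Matrix (Fin K) (Fin K) ℝ)

/-- scalar path-mass from `MlInf`: `jfun s x μ` is over backward `x` steps at times
`s, s-1, ..., s-x+1`. -/
def jfun : ℕ → ℕ → Fin K → ℝ
  | _, 0, μ => if μ ∈ MlInf E then 1 else 0
  | s, x + 1, μ => ∑ a ∈ Nin E μ, P s μ a * jfun (s - 1) x a

/-- `B`-restricted backward mass. -/
def Vfun : ℕ → ℕ → Fin K → ℝ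
  | _, 0, μ => if μ ∈ Bset E then 1 else 0
  | s, x + 1, μ => if μ ∈ Bset E then ∑ a ∈ Nin E μ, P s μ a * Vfun (s - 1) x a else 0

variable {α : ℝ} (hα0 : 0 < α) (hα1 : α < 1)
variable (hPnn : ∀ t, 1 ≤ t → ∀ μ ν : Fin K, 0 ≤ P t μ ν)
variable (hProw : ∀ t, 1 ≤ t → ∀ μ ∈ Ml E, ∑ ν ∈ Nin E μ, P t μ ν = 1)
variable (hPα : ∀ t, 1 ≤ t → ∀ ν μ : Fin K, (ν, μ) ∈ E → α ≤ P t μ ν)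

include hPnn in
lemma jfun_nonneg : ∀ x s μ, x ≤ s → 0 ≤ jfun E P s x μ := by
  intro x
  induction x with
  | zero => intro s μ _; dsimp [jfun]; positivity
  | succ x ih =>
    intro s μ hx
    dsimp [jfun]
    refine Finset.sum_nonneg fun a ha => mul_nonneg (hPnn s (by omega) μ a) (ih _ a (by omega))

include hPnn hProw in
lemma jfun_le_one : ∀ x s μ, x ≤ s → jfun E P s x μ ≤ 1 := by
  intro x
  induction x with
  | zero => intro s μ _; dsimp [jfun]; split <;> norm_num
  | succ x ih =>
    intro s μ hx
    dsimp [jfun]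
    have h1 : ∑ a ∈ Nin E μ, P s μ a * jfun E P (s - 1) x a ≤ ∑ a ∈ Nin E μ, P s μ a := by
      refine Finset.sum_le_sum fun a ha => ?_
      exact mul_le_of_le_one_right (hPnn s (by omega) μ a) (ih _ a (by omega))
    refine h1.trans ?_
    rcases ml_or_mu E μ with h | h
    · rw [hProw s (by omega) μ h]
    · simp only [Mu, Finset.mem_filter, Finset.mem_univ, true_and] at h
      simp [h]

include hProw in
lemma jfun_MlInf : ∀ x s μ, x ≤ s → μ ∈ MlInf E → jfun E P s x μ = 1 := by
  intro x
  induction x with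
  | zero => intro s μ _ hμ; simp [jfun, hμ]
  | succ x ih =>
    intro s μ hx hμ
    dsimp [jfun]
    have : ∀ a ∈ Nin E μ, P s μ a * jfun E P (s - 1) x a = P s μ a := by
      intro a ha
      rw [ih (s - 1) a (by omega) (nin_MlInf E hμ ha), mul_one]
    rw [Finset.sum_congr rfl this, hProw s (by omega) μ (MlInf_subset_Ml E hμ)]

include hα0 hα1 hPnn hProw hPα in
lemma jfun_ge : ∀ x s μ n, x ≤ s → μ ∈ Rlay E n → n ≤ x → α ^ n ≤ jfun E P s x μ := by
  intro x
  induction x with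
  | zero =>
    intro s μ n _ hμ hn
    have : n = 0 := by omega
    subst this
    simp [jfun, show μ ∈ MlInf E from hμ]
  | succ x ih =>
    intro s μ n hx hμ hn
    by_cases hμ' : μ ∈ MlInf E
    · rw [jfun_MlInf E P hProw _ s μ hx hμ']
      exact pow_le_one₀ hα0.le hα1.le
    · rcases Rlay_cases E hμ with h | ⟨m, hm, a, ha, hedge⟩
      · exact absurd h hμ'
      · have haNin : a ∈ Nin E μ := (mem_Nin E).2 hedge
        have hstep : α * α ^ m ≤ P s μ a * jfun E P (s - 1) x a := by
          refine mul_le_mul (hPα s (by omega) a μ hedge)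
            (ih (s - 1) a m (by omega) ha (by omega))
            (by positivity) ((hα0.trans_le (hPα s (by omega) a μ hedge)).le)
        have hsum : P s μ a * jfun E P (s - 1) x a ≤ jfun E P s (x + 1) μ := by
          dsimp [jfun]
          refine Finset.single_le_sum (fun b hb => mul_nonneg (hPnn s (by omega) μ b)
            (jfun_nonneg E P hPnn x (s - 1) b (by omega))) haNin
        calc α ^ n ≤ α ^ (m + 1) := by
              refine pow_le_pow_of_le_one hα0.le hα1.le hm
          _ = α * α ^ m := by ring
          _ ≤ _ := hstep.trans hsum

lemma jfun_zero_notMlc : ∀ x s μ, μ ∉ Mlc E → jfun E P s x μ = 0 := by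
  intro x
  induction x with
  | zero =>
    intro s μ hμ
    have : μ ∉ MlInf E := fun h => hμ (MlInf_subset_Mlc E h)
    simp [jfun, this]
  | succ x ih =>
    intro s μ hμ
    dsimp [jfun]
    refine Finset.sum_eq_zero fun a ha => ?_
    have : a ∉ Mlc E := fun hc => hμ (Mlc_of_edge E hc ((mem_Nin E).1 ha))
    rw [ih _ a this, mul_zero]

lemma Vfun_zero_notB : ∀ x s μ, μ ∉ Bset E → Vfun E P s x μ = 0 := by
  intro x s μ hμ
  cases x <;> simp [Vfun, hμ]

include hPnn in
lemma Vfun_nonneg : ∀ x s μ, x ≤ s → 0 ≤ Vfun E P s x μ := by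
  intro x
  induction x with
  | zero => intro s μ _; dsimp [Vfun]; positivity
  | succ x ih =>
    intro s μ hx
    dsimp [Vfun]
    split
    · exact Finset.sum_nonneg fun a ha =>
        mul_nonneg (hPnn s (by omega) μ a) (ih _ a (by omega))
    · exact le_refl 0

include hPnn hProw in
lemma Vfun_le_one : ∀ x s μ, x ≤ s → Vfun E P s x μ ≤ 1 := by
  intro x
  induction x with
  | zero => intro s μ _; dsimp [Vfun]; split <;> norm_num
  | succ x ih =>
    intro s μ hx
    dsimp [Vfun]
    split
    · have h1 : ∑ a ∈ Nin E μ, P s μ a * Vfun E P (s - 1) x a ≤ ∑ a ∈ Nin E μ, P s μ a :=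
        Finset.sum_le_sum fun a ha =>
          mul_le_of_le_one_right (hPnn s (by omega) μ a) (ih _ a (by omega))
      refine h1.trans ?_
      rcases ml_or_mu E μ with h | h
      · rw [hProw s (by omega) μ h]
      · simp only [Mu, Finset.mem_filter, Finset.mem_univ, true_and] at h
        simp [h]
    · norm_num

include hPnn hProw in
lemma Vfun_propagate {r : ℕ} {c : ℝ} (hc : 0 ≤ c)
    (h : ∀ s' μ', r ≤ s' → Vfun E P s' r μ' ≤ c) :
    ∀ m s μ, m + r ≤ s → Vfun E P s (m + r) μ ≤ c := by
  intro m
  induction m with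
  | zero => intro s μ hs; rw [Nat.zero_add]; exact h s μ (by omega)
  | succ m ih =>
    intro s μ hs
    rw [show m + 1 + r = (m + r) + 1 by omega]
    dsimp [Vfun]
    split
    · have h1 : ∑ a ∈ Nin E μ, P s μ a * Vfun E P (s - 1) (m + r) a
          ≤ ∑ a ∈ Nin E μ, P s μ a * c := by
        refine Finset.sum_le_sum fun a ha => ?_
        exact mul_le_mul_of_nonneg_left (ih (s - 1) a (by omega)) (hPnn s (by omega) μ a)
      refine h1.trans ?_
      rw [← Finset.sum_mul]
      have h2 : ∑ a ∈ Nin E μ, P s μ a ≤ 1 := by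
        rcases ml_or_mu E μ with h' | h'
        · rw [hProw s (by omega) μ h']
        · simp only [Mu, Finset.mem_filter, Finset.mem_univ, true_and] at h'
          simp [h']
      calc (∑ a ∈ Nin E μ, P s μ a) * c ≤ 1 * c :=
            mul_le_mul_of_nonneg_right h2 hc
        _ = c := one_mul c
    · exact hc


include hα0 hα1 hPnn hProw hPα in
lemma Vfun_escape {r : ℕ} {c : ℝ} (hc : 0 ≤ c)
    (hr : ∀ s' μ', r ≤ s' → Vfun E P s' r μ' ≤ c) :
    ∀ L (v μ : Fin K), v ∈ MlInf E → PathLen E v μ L →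
      ∀ n, L ≤ n → ∀ s, n + r ≤ s → Vfun E P s (n + r) μ ≤ (1 - α ^ L) * c := by
  intro L
  induction L with
  | zero =>
    intro v μ hv hpath n _ s _
    rcases hpath with ⟨f, hf0, hfL, _⟩
    have : μ = v := by rw [← hf0, ← hfL]
    subst this
    have hB : μ ∉ Bset E := by
      simp only [Bset, Finset.mem_sdiff]
      exact fun h => h.2 hv
    rw [Vfun_zero_notB E P _ _ _ hB]
    simp
  | succ L ih =>
    intro v μ hv hpath n hLn s hs
    have hαL1 : α ^ (L + 1) ≤ 1 := pow_le_one₀ hα0.le hα1.le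
    by_cases hB : μ ∈ Bset E
    · rcases hpath with ⟨f, hf0, hfL, hfe⟩
      set a := f L with ha
      have hedge : (a, μ) ∈ E := by
        have := hfe L (Nat.lt_succ_self L)
        rwa [hfL] at this
      have hpatha : PathLen E v a L := ⟨f, hf0, rfl, fun i hi => hfe i (hi.trans (Nat.lt_succ_self L))⟩
      obtain ⟨n', rfl⟩ : ∃ n', n = n' + 1 := ⟨n - 1, by omega⟩
      have hrw : n' + 1 + r = (n' + r) + 1 := by omega
      rw [hrw]
      have hs1 : 1 ≤ s := by omega
      dsimp [Vfun]
      rw [if_pos hB]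
      have haNin : a ∈ Nin E μ := (mem_Nin E).2 hedge
      rw [← Finset.add_sum_erase _ _ haNin]
      have hterm : P s μ a * Vfun E P (s - 1) (n' + r) a ≤ P s μ a * ((1 - α ^ L) * c) := by
        refine mul_le_mul_of_nonneg_left ?_ (hPnn s hs1 μ a)
        exact ih v a hv hpatha n' (by omega) (s - 1) (by omega)
      have hrest : ∑ b ∈ (Nin E μ).erase a, P s μ b * Vfun E P (s - 1) (n' + r) b
          ≤ ∑ b ∈ (Nin E μ).erase a, P s μ b * c := by
        refine Finset.sum_le_sum fun b hb => ?_
        refine mul_le_mul_of_nonneg_left ?_ (hPnn s hs1 μ b)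
        exact Vfun_propagate E P hPnn hProw hc hr n' (s - 1) b (by omega)
      have hrow : ∑ b ∈ Nin E μ, P s μ b = 1 :=
        hProw s hs1 μ (Mlc_subset_Ml E (Bset_subset_Mlc E hB))
      have hsum_erase : ∑ b ∈ (Nin E μ).erase a, P s μ b = 1 - P s μ a := by
        have := Finset.add_sum_erase _ (fun b => P s μ b) haNin
        rw [hrow] at this
        linarith
      have hPa : α ≤ P s μ a := hPα s hs1 a μ hedge
      calc P s μ a * Vfun E P (s - 1) (n' + r) a +
            ∑ b ∈ (Nin E μ).erase a, P s μ b * Vfun E P (s - 1) (n' + r) b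
          ≤ P s μ a * ((1 - α ^ L) * c) + (1 - P s μ a) * c := by
            rw [← hsum_erase, Finset.sum_mul]
            exact add_le_add hterm hrest
        _ = c - P s μ a * (α ^ L * c) := by ring
        _ ≤ c - α * (α ^ L * c) := by
            have : α * (α ^ L * c) ≤ P s μ a * (α ^ L * c) :=
              mul_le_mul_of_nonneg_right hPa (by positivity)
            linarith
        _ = (1 - α ^ (L + 1)) * c := by ring
    · rw [Vfun_zero_notB E P _ _ _ hB]
      exact mul_nonneg (by linarith) hc

include hα0 hα1 hPnn hProw hPα in
lemma Vfun_K_step (hK : 1 ≤ K) {r : ℕ} {c : ℝ} (hc : 0 ≤ c)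
    (hr : ∀ s' μ', r ≤ s' → Vfun E P s' r μ' ≤ c) :
    ∀ s μ, K + r ≤ s → Vfun E P s (K + r) μ ≤ (1 - α ^ K) * c := by
  intro s μ hs
  by_cases hB : μ ∈ Bset E
  · have hμc : μ ∈ Mlc E := Bset_subset_Mlc E hB
    have hR : μ ∈ S17.Rlay E (K - 1) := Mlc_subset_Rlay E hK hμc
    rcases Rlay_path E hR with ⟨L, hL, v, hv, hpath⟩
    have h1 : Vfun E P s (K + r) μ ≤ (1 - α ^ L) * c :=
      Vfun_escape E P hα0 hα1 hPnn hProw hPα hc hr L v μ hv hpath K (by omega) s hs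
    refine h1.trans ?_
    have : α ^ K ≤ α ^ L := pow_le_pow_of_le_one hα0.le hα1.le (by omega)
    nlinarith
  · rw [Vfun_zero_notB E P _ _ _ hB]
    have : α ^ K ≤ 1 := pow_le_one₀ hα0.le hα1.le
    exact mul_nonneg (by linarith) hc

include hα0 hα1 hPnn hProw hPα in
lemma Vfun_pow (hK : 1 ≤ K) :
    ∀ q x s μ, x ≤ s → q ≤ x / K → Vfun E P s x μ ≤ (1 - α ^ K) ^ q := by
  intro q
  induction q with
  | zero =>
    intro x s μ hx _
    simpa using Vfun_le_one E P hPnn hProw x s μ hx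
  | succ q ih =>
    intro x s μ hx hq
    have hKx : (q + 1) * K ≤ x := (Nat.le_div_iff_mul_le (by omega : 0 < K)).1 hq
    have hKx' : q * K + K ≤ x := by
      calc q * K + K = (q + 1) * K := by ring
        _ ≤ x := hKx
    have hxK : K ≤ x := le_trans (Nat.le_mul_of_pos_left K (by omega)) hKx
    set r := x - K with hr
    have hxr : x = K + r := by omega
    have hc : (0 : ℝ) ≤ (1 - α ^ K) ^ q := by
      have : α ^ K ≤ 1 := pow_le_one₀ hα0.le hα1.le
      exact pow_nonneg (by linarith) q
    have hrec : ∀ s' μ', r ≤ s' → Vfun E P s' r μ' ≤ (1 - α ^ K) ^ q := by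
      intro s' μ' hs'
      refine ih r s' μ' hs' ?_
      rw [Nat.le_div_iff_mul_le (by omega : 0 < K)]
      exact Nat.le_sub_of_add_le hKx'
    rw [hxr]
    have := Vfun_K_step E P hα0 hα1 hPnn hProw hPα hK hc hrec s μ (by omega)
    calc Vfun E P s (K + r) μ ≤ (1 - α ^ K) * (1 - α ^ K) ^ q := this
      _ = (1 - α ^ K) ^ (q + 1) := by ring


variable {d : ℕ} (M : ℕ → Fin K → Fin K → Matrix (Fin d) (Fin d) ℝ)

/-- matrix path-mass from `MlInf`. -/
def Gfun : ℕ → ℕ → Fin K → Matrix (Fin d) (Fin d) ℝ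
  | _, 0, μ => if μ ∈ MlInf E then 1 else 0
  | s, x + 1, μ => ∑ a ∈ Nin E μ, M s μ a * Gfun (s - 1) x a

def Errf (s x : ℕ) (μ : Fin K) : Matrix (Fin d) (Fin d) ℝ :=
  Gfun E M s x μ - jfun E P s x μ • (1 : Matrix (Fin d) (Fin d) ℝ)

variable (hMrow : ∀ t, 1 ≤ t → ∀ μ ∈ Ml E, ∑ ν ∈ Nin E μ, M t μ ν = 1)

include hMrow in
lemma Gfun_MlInf : ∀ x s μ, x ≤ s → μ ∈ MlInf E → Gfun E M s x μ = 1 := by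
  intro x
  induction x with
  | zero => intro s μ _ hμ; simp [Gfun, hμ]
  | succ x ih =>
    intro s μ hx hμ
    dsimp [Gfun]
    have : ∀ a ∈ Nin E μ, M s μ a * Gfun E M (s - 1) x a = M s μ a := by
      intro a ha
      rw [ih (s - 1) a (by omega) (nin_MlInf E hμ ha), mul_one]
    rw [Finset.sum_congr rfl this, hMrow s (by omega) μ (MlInf_subset_Ml E hμ)]

lemma Gfun_zero_notMlc : ∀ x s μ, μ ∉ Mlc E → Gfun E M s x μ = 0 := by
  intro x
  induction x with
  | zero =>
    intro s μ hμ
    have : μ ∉ MlInf E := fun h => hμ (MlInf_subset_Mlc E h)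
    simp [Gfun, this]
  | succ x ih =>
    intro s μ hμ
    dsimp [Gfun]
    refine Finset.sum_eq_zero fun a ha => ?_
    have : a ∉ Mlc E := fun hc => hμ (Mlc_of_edge E hc ((mem_Nin E).1 ha))
    rw [ih _ a this, mul_zero]

include hMrow hProw in
lemma Errf_zero_notB {x s : ℕ} {μ : Fin K} (hx : x ≤ s) (hμ : μ ∉ Bset E) :
    Errf E P M s x μ = 0 := by
  rw [Errf]
  by_cases h1 : μ ∈ MlInf E
  · rw [Gfun_MlInf E M hMrow x s μ hx h1, jfun_MlInf E P hProw x s μ hx h1, one_smul, sub_self]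
  · have h2 : μ ∉ Mlc E := by
      intro h2
      exact hμ (by simp [Bset, Finset.mem_sdiff, h2, h1])
    rw [Gfun_zero_notMlc E M x s μ h2, jfun_zero_notMlc E P x s μ h2, zero_smul, sub_self]

lemma Errf_zero_len0 (s : ℕ) (μ : Fin K) : Errf E P M s 0 μ = 0 := by
  rw [Errf]; dsimp [Gfun, jfun]; split <;> simp

lemma Errf_rec (s x : ℕ) (μ : Fin K) :
    Errf E P M s (x + 1) μ = ∑ a ∈ Nin E μ,
      (M s μ a * Errf E P M (s - 1) x a +
        jfun E P (s - 1) x a • (M s μ a - P s μ a • (1 : Matrix (Fin d) (Fin d) ℝ))) := by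
  have hterm : ∀ a : Fin K,
      M s μ a * Gfun E M (s - 1) x a -
        (P s μ a * jfun E P (s - 1) x a) • (1 : Matrix (Fin d) (Fin d) ℝ) =
      M s μ a * Errf E P M (s - 1) x a +
        jfun E P (s - 1) x a • (M s μ a - P s μ a • (1 : Matrix (Fin d) (Fin d) ℝ)) := by
    intro a
    rw [Errf, mul_sub, smul_sub, mul_smul_comm, mul_one, smul_smul,
      mul_comm (jfun E P (s - 1) x a) (P s μ a)]
    abel
  have h0 : Errf E P M s (x + 1) μ = ∑ a ∈ Nin E μ,
      (M s μ a * Gfun E M (s - 1) x a -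
        (P s μ a * jfun E P (s - 1) x a) • (1 : Matrix (Fin d) (Fin d) ℝ)) := by
    rw [Errf]
    dsimp [Gfun, jfun]
    rw [Finset.sum_smul, ← Finset.sum_sub_distrib]
  rw [h0]
  exact Finset.sum_congr rfl fun a _ => hterm a

variable (η : ℝ) (hη : 0 ≤ η) (hd : 1 ≤ d)
variable (hM : ∀ t, 1 ≤ t → ∀ ν μ : Fin K, (ν, μ) ∈ E →
      ‖M t μ ν - P t μ ν • (1 : Matrix (Fin d) (Fin d) ℝ)‖ ≤ η)

include hα0 hη hd hM hPα in
lemma M_norm_le {s : ℕ} {a μ : Fin K} (hs : 1 ≤ s) (ha : a ∈ Nin E μ) :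
    ‖M s μ a‖ ≤ (1 + η / α) * P s μ a := by
  have hedge : (a, μ) ∈ E := (mem_Nin E).1 ha
  have hP : α ≤ P s μ a := hPα s hs a μ hedge
  have h1 : ‖M s μ a‖ ≤ η + P s μ a := by
    calc ‖M s μ a‖ = ‖(M s μ a - P s μ a • (1 : Matrix (Fin d) (Fin d) ℝ)) +
          P s μ a • (1 : Matrix (Fin d) (Fin d) ℝ)‖ := by rw [sub_add_cancel]
      _ ≤ ‖M s μ a - P s μ a • (1 : Matrix (Fin d) (Fin d) ℝ)‖ +
          ‖P s μ a • (1 : Matrix (Fin d) (Fin d) ℝ)‖ := norm_add_le _ _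
      _ ≤ η + P s μ a := by
          refine add_le_add (hM s hs a μ hedge) ?_
          rw [norm_smul, Real.norm_eq_abs, norm_one_mat hd,
            abs_of_nonneg (by linarith), mul_one]
  have h2 : η ≤ (η / α) * P s μ a := by
    calc η = (η / α) * α := by field_simp
      _ ≤ (η / α) * P s μ a := by
          exact mul_le_mul_of_nonneg_left hP (by positivity)
  nlinarith

include hα0 hα1 hη hd hM hMrow hPnn hProw hPα in
lemma Errf_le : ∀ x s μ, x ≤ s →
    ‖Errf E P M s x μ‖ ≤ (K * η) * ∑ r ∈ Finset.range x,
      (1 + η / α) ^ (r + 1) * Vfun E P s r μ := by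
  intro x
  induction x with
  | zero => intro s μ _; rw [Errf_zero_len0]; simp
  | succ x ih =>
    intro s μ hx
    have hs1 : 1 ≤ s := by omega
    have hβ0 : (0:ℝ) < 1 + η / α := by positivity
    have hβ1 : (1:ℝ) ≤ 1 + η / α := by
      have : (0:ℝ) ≤ η / α := by positivity
      linarith
    by_cases hB : μ ∈ Bset E
    · have hMl : μ ∈ Ml E := Mlc_subset_Ml E (Bset_subset_Mlc E hB)
      rw [Errf_rec]
      have hstep1 : ‖∑ a ∈ Nin E μ,
          (M s μ a * Errf E P M (s - 1) x a +
            jfun E P (s - 1) x a • (M s μ a - P s μ a • (1 : Matrix (Fin d) (Fin d) ℝ)))‖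
          ≤ ∑ a ∈ Nin E μ, (‖M s μ a‖ * ‖Errf E P M (s - 1) x a‖ + η) := by
        refine (norm_sum_le _ _).trans (Finset.sum_le_sum fun a ha => ?_)
        refine (norm_add_le _ _).trans (add_le_add (Matrix.l2_opNorm_mul _ _) ?_)
        rw [norm_smul, Real.norm_eq_abs]
        have hj1 : |jfun E P (s - 1) x a| ≤ 1 := by
          rw [abs_of_nonneg (jfun_nonneg E P hPnn x (s - 1) a (by omega))]
          exact jfun_le_one E P hPnn hProw x (s - 1) a (by omega)
        have hMP : ‖M s μ a - P s μ a • (1 : Matrix (Fin d) (Fin d) ℝ)‖ ≤ η :=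
          hM s hs1 a μ ((mem_Nin E).1 ha)
        calc |jfun E P (s - 1) x a| * ‖M s μ a - P s μ a • (1 : Matrix (Fin d) (Fin d) ℝ)‖
            ≤ 1 * η := by
              refine mul_le_mul hj1 hMP (norm_nonneg _) zero_le_one
          _ = η := one_mul η
      have hstep2 : ∑ a ∈ Nin E μ, (‖M s μ a‖ * ‖Errf E P M (s - 1) x a‖ + η)
          ≤ (∑ a ∈ Nin E μ, (1 + η / α) * P s μ a * ‖Errf E P M (s - 1) x a‖) + K * η := by
        rw [Finset.sum_add_distrib]
        refine add_le_add (Finset.sum_le_sum fun a ha => ?_) ?_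
        · exact mul_le_mul_of_nonneg_right (M_norm_le E P hα0 hPα M η hη hd hM hs1 ha)
            (norm_nonneg _)
        · rw [Finset.sum_const, nsmul_eq_mul]
          refine mul_le_mul_of_nonneg_right ?_ hη
          have := Finset.card_le_univ (Nin E μ)
          rw [Fintype.card_fin] at this
          exact_mod_cast this
      have hstep3 : ∑ a ∈ Nin E μ, (1 + η / α) * P s μ a * ‖Errf E P M (s - 1) x a‖
          ≤ ∑ a ∈ Nin E μ, (1 + η / α) * P s μ a *
            ((K * η) * ∑ r ∈ Finset.range x, (1 + η / α) ^ (r + 1) * Vfun E P (s - 1) r a) := by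
        refine Finset.sum_le_sum fun a ha => ?_
        refine mul_le_mul_of_nonneg_left (ih (s - 1) a (by omega)) ?_
        exact mul_nonneg hβ0.le (hPnn s hs1 μ a)
      have hswap : ∑ a ∈ Nin E μ, (1 + η / α) * P s μ a *
            ((K * η) * ∑ r ∈ Finset.range x, (1 + η / α) ^ (r + 1) * Vfun E P (s - 1) r a)
          = ∑ r ∈ Finset.range x,
              (K * η) * ((1 + η / α) ^ (r + 2) *
                ∑ a ∈ Nin E μ, P s μ a * Vfun E P (s - 1) r a) := by
        have e1 : ∀ a ∈ Nin E μ, (1 + η / α) * P s μ a *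
              ((K * η) * ∑ r ∈ Finset.range x, (1 + η / α) ^ (r + 1) * Vfun E P (s - 1) r a)
            = ∑ r ∈ Finset.range x,
                (K * η) * ((1 + η / α) ^ (r + 2) * (P s μ a * Vfun E P (s - 1) r a)) := by
          intro a _
          rw [Finset.mul_sum, Finset.mul_sum]
          exact Finset.sum_congr rfl fun r _ => by ring
        rw [Finset.sum_congr rfl e1, Finset.sum_comm]
        refine Finset.sum_congr rfl fun r _ => ?_
        rw [Finset.mul_sum, Finset.mul_sum]
      have hVrec : ∀ r, Vfun E P s (r + 1) μ = ∑ a ∈ Nin E μ, P s μ a * Vfun E P (s - 1) r a := by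
        intro r
        dsimp [Vfun]
        rw [if_pos hB]
      have hV0 : Vfun E P s 0 μ = 1 := by dsimp [Vfun]; rw [if_pos hB]
      calc ‖∑ a ∈ Nin E μ,
            (M s μ a * Errf E P M (s - 1) x a +
              jfun E P (s - 1) x a • (M s μ a - P s μ a • (1 : Matrix (Fin d) (Fin d) ℝ)))‖
          ≤ ∑ a ∈ Nin E μ, (‖M s μ a‖ * ‖Errf E P M (s - 1) x a‖ + η) := hstep1
        _ ≤ (∑ a ∈ Nin E μ, (1 + η / α) * P s μ a * ‖Errf E P M (s - 1) x a‖) + K * η := hstep2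
        _ ≤ (∑ a ∈ Nin E μ, (1 + η / α) * P s μ a *
              ((K * η) * ∑ r ∈ Finset.range x, (1 + η / α) ^ (r + 1) * Vfun E P (s - 1) r a))
              + K * η := add_le_add_left hstep3 _
        _ = (∑ r ∈ Finset.range x, (K * η) * ((1 + η / α) ^ (r + 2) * Vfun E P s (r + 1) μ))
              + K * η := by
            rw [hswap]
            congr 1
            exact Finset.sum_congr rfl fun r _ => by rw [hVrec r]
        _ ≤ (∑ r ∈ Finset.range x, (K * η) * ((1 + η / α) ^ (r + 2) * Vfun E P s (r + 1) μ))
              + (K * η) * ((1 + η / α) ^ (0 + 1) * Vfun E P s 0 μ) := by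
            rw [hV0, mul_one, pow_one]
            have hKη : (0:ℝ) ≤ (K:ℝ) * η := mul_nonneg (Nat.cast_nonneg K) hη
            nlinarith
        _ = (K * η) * ∑ r ∈ Finset.range (x + 1), (1 + η / α) ^ (r + 1) * Vfun E P s r μ := by
            rw [Finset.mul_sum, Finset.sum_range_succ']
    · rw [Errf_zero_notB E P hProw M hMrow hx hB]
      simp only [norm_zero]
      refine mul_nonneg (mul_nonneg (Nat.cast_nonneg K) hη) (Finset.sum_nonneg fun r hr => ?_)
      refine mul_nonneg (pow_nonneg hβ0.le _) (Vfun_nonneg E P hPnn r s μ ?_)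
      simp only [Finset.mem_range] at hr
      omega


include hα0 hα1 hη hd hM hMrow hPnn hProw hPα in
lemma Errf_le_C (hK : 1 ≤ K)
    (hc1 : (1 + η / α) * (1 - α ^ K) ^ ((1:ℝ)/K) < 1) :
    ∀ x s μ, x ≤ s → ‖Errf E P M s x μ‖ ≤
      K * η / (α * (1 - α ^ K) ^ ((1:ℝ)/K + 1) *
        (1 - (1 + η / α) * (1 - α ^ K) ^ ((1:ℝ)/K)) ^ 2) := by
  intro x s μ hx
  have hαK1 : α ^ K < 1 := pow_lt_one₀ hα0.le hα1 (by omega)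
  have hαK0 : 0 < α ^ K := pow_pos hα0 K
  have hb0 : (0:ℝ) < 1 - α ^ K := by linarith
  have hb1 : 1 - α ^ K < 1 := by linarith
  have hβ0 : (0:ℝ) < 1 + η / α := by positivity
  have hβ1 : (1:ℝ) ≤ 1 + η / α := by
    have : (0:ℝ) ≤ η / α := by positivity
    linarith
  have hu0 : (0:ℝ) < (1 - α ^ K) ^ ((1:ℝ)/K) := Real.rpow_pos_of_pos hb0 _
  have hc₁0 : (0:ℝ) < (1 + η / α) * (1 - α ^ K) ^ ((1:ℝ)/K) := mul_pos hβ0 hu0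
  have hKR : (0:ℝ) < (K:ℝ) := by exact_mod_cast (by omega : 0 < K)
  have hterm : ∀ r, r < x → (1 + η / α) ^ (r + 1) * Vfun E P s r μ ≤
      ((1 + η / α) / (1 - α ^ K)) * ((1 + η / α) * (1 - α ^ K) ^ ((1:ℝ)/K)) ^ r := by
    intro r hr
    have hV : Vfun E P s r μ ≤ (1 - α ^ K) ^ (r / K) :=
      Vfun_pow E P hα0 hα1 hPnn hProw hPα hK (r / K) r s μ (by omega) le_rfl
    have h1 : (1 + η / α) ^ (r + 1) * Vfun E P s r μ
        ≤ (1 + η / α) ^ (r + 1) * (1 - α ^ K) ^ (r / K) :=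
      mul_le_mul_of_nonneg_left hV (pow_nonneg hβ0.le _)
    have h2 : ((1 - α ^ K) : ℝ) ^ (r / K) ≤ (1 - α ^ K) ^ (((r:ℝ)/K) - 1) := by
      rw [← Real.rpow_natCast (1 - α ^ K) (r / K)]
      apply Real.rpow_le_rpow_of_exponent_ge hb0 hb1.le
      have hlt : r < K * (r / K) + K := by
        have := Nat.div_add_mod r K
        have := Nat.mod_lt r (show 0 < K by omega)
        omega
      have hltR : (r:ℝ) < K * ((r / K : ℕ):ℝ) + K := by exact_mod_cast hlt
      rw [sub_le_iff_le_add, div_le_iff₀ hKR]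
      nlinarith
    have h3 : (1 - α ^ K) ^ (((r:ℝ)/K) - 1)
        = ((1 - α ^ K) ^ ((1:ℝ)/K)) ^ r * (1 - α ^ K)⁻¹ := by
      rw [Real.rpow_sub hb0, Real.rpow_one]
      congr 1
      rw [← Real.rpow_natCast ((1 - α ^ K) ^ ((1:ℝ)/K)) r, ← Real.rpow_mul hb0.le]
      congr 1
      ring
    calc (1 + η / α) ^ (r + 1) * Vfun E P s r μ
        ≤ (1 + η / α) ^ (r + 1) * (1 - α ^ K) ^ (r / K) := h1
      _ ≤ (1 + η / α) ^ (r + 1) * (((1 - α ^ K) ^ ((1:ℝ)/K)) ^ r * (1 - α ^ K)⁻¹) := by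
          rw [← h3]
          exact mul_le_mul_of_nonneg_left h2 (pow_nonneg hβ0.le _)
      _ = ((1 + η / α) / (1 - α ^ K)) * ((1 + η / α) * (1 - α ^ K) ^ ((1:ℝ)/K)) ^ r := by
          rw [mul_pow, pow_succ, div_eq_mul_inv]
          ring
  have hsum : ∑ r ∈ Finset.range x, (1 + η / α) ^ (r + 1) * Vfun E P s r μ
      ≤ ((1 + η / α) / (1 - α ^ K)) *
        ∑ r ∈ Finset.range x, ((1 + η / α) * (1 - α ^ K) ^ ((1:ℝ)/K)) ^ r := by
    rw [Finset.mul_sum]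
    exact Finset.sum_le_sum fun r hr => hterm r (Finset.mem_range.1 hr)
  have hgeom : ∑ r ∈ Finset.range x, ((1 + η / α) * (1 - α ^ K) ^ ((1:ℝ)/K)) ^ r
      ≤ 1 / (1 - (1 + η / α) * (1 - α ^ K) ^ ((1:ℝ)/K)) := by
    set c := (1 + η / α) * (1 - α ^ K) ^ ((1:ℝ)/K) with hc
    have h2 : (∑ r ∈ Finset.range x, c ^ r) * (1 - c) = 1 - c ^ x := by
      linear_combination -(geom_sum_mul c x)
    rw [le_div_iff₀ (by linarith : (0:ℝ) < 1 - c), h2]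
    have : (0:ℝ) ≤ c ^ x := pow_nonneg hc₁0.le x
    linarith
  have hKη : (0:ℝ) ≤ (K:ℝ) * η := mul_nonneg (Nat.cast_nonneg K) hη
  have hkey : ((1 + η / α) / (1 - α ^ K)) *
        (1 / (1 - (1 + η / α) * (1 - α ^ K) ^ ((1:ℝ)/K)))
      ≤ 1 / (α * (1 - α ^ K) ^ ((1:ℝ)/K + 1) *
        (1 - (1 + η / α) * (1 - α ^ K) ^ ((1:ℝ)/K)) ^ 2) := by
    have hbp : (1 - α ^ K) ^ ((1:ℝ)/K + 1) = (1 - α ^ K) ^ ((1:ℝ)/K) * (1 - α ^ K) := by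
      rw [Real.rpow_add hb0, Real.rpow_one]
    rw [hbp, div_mul_div_comm, mul_one]
    have hden1 : (0:ℝ) < (1 - α ^ K) * (1 - (1 + η / α) * (1 - α ^ K) ^ ((1:ℝ)/K)) := by
      have : (0:ℝ) < 1 - (1 + η / α) * (1 - α ^ K) ^ ((1:ℝ)/K) := by linarith
      positivity
    have hden2 : (0:ℝ) < α * ((1 - α ^ K) ^ ((1:ℝ)/K) * (1 - α ^ K)) *
        (1 - (1 + η / α) * (1 - α ^ K) ^ ((1:ℝ)/K)) ^ 2 := by
      have h1c : (0:ℝ) < 1 - (1 + η / α) * (1 - α ^ K) ^ ((1:ℝ)/K) := by linarith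
      positivity
    rw [div_le_div_iff₀ hden1 hden2]
    have e : (1 + η / α) * (α * ((1 - α ^ K) ^ ((1:ℝ)/K) * (1 - α ^ K)) *
          (1 - (1 + η / α) * (1 - α ^ K) ^ ((1:ℝ)/K)) ^ 2)
        = (α * ((1 + η / α) * (1 - α ^ K) ^ ((1:ℝ)/K)) *
            (1 - (1 + η / α) * (1 - α ^ K) ^ ((1:ℝ)/K))) *
          ((1 - α ^ K) * (1 - (1 + η / α) * (1 - α ^ K) ^ ((1:ℝ)/K))) := by
      ring
    rw [e]
    have h5 : α * ((1 + η / α) * (1 - α ^ K) ^ ((1:ℝ)/K)) *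
        (1 - (1 + η / α) * (1 - α ^ K) ^ ((1:ℝ)/K)) ≤ 1 := by
      have h6 : α * ((1 + η / α) * (1 - α ^ K) ^ ((1:ℝ)/K)) ≤ 1 :=
        mul_le_one₀ hα1.le hc₁0.le hc1.le
      have h7 : (0:ℝ) ≤ α * ((1 + η / α) * (1 - α ^ K) ^ ((1:ℝ)/K)) :=
        le_of_lt (mul_pos hα0 hc₁0)
      have h8 : (1:ℝ) - (1 + η / α) * (1 - α ^ K) ^ ((1:ℝ)/K) ≤ 1 := by linarith
      exact mul_le_one₀ h6 (by linarith) h8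
    calc (α * ((1 + η / α) * (1 - α ^ K) ^ ((1:ℝ)/K)) *
            (1 - (1 + η / α) * (1 - α ^ K) ^ ((1:ℝ)/K))) *
          ((1 - α ^ K) * (1 - (1 + η / α) * (1 - α ^ K) ^ ((1:ℝ)/K)))
        ≤ 1 * ((1 - α ^ K) * (1 - (1 + η / α) * (1 - α ^ K) ^ ((1:ℝ)/K))) :=
          mul_le_mul_of_nonneg_right h5 hden1.le
      _ = 1 * ((1 - α ^ K) * (1 - (1 + η / α) * (1 - α ^ K) ^ ((1:ℝ)/K))) := rfl
  calc ‖Errf E P M s x μ‖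
      ≤ (K * η) * ∑ r ∈ Finset.range x, (1 + η / α) ^ (r + 1) * Vfun E P s r μ :=
        Errf_le E P hα0 hα1 hPnn hProw hPα M hMrow η hη hd hM x s μ hx
    _ ≤ (K * η) * (((1 + η / α) / (1 - α ^ K)) *
          (1 / (1 - (1 + η / α) * (1 - α ^ K) ^ ((1:ℝ)/K)))) := by
        refine mul_le_mul_of_nonneg_left ?_ hKη
        calc ∑ r ∈ Finset.range x, (1 + η / α) ^ (r + 1) * Vfun E P s r μ
            ≤ ((1 + η / α) / (1 - α ^ K)) *
              ∑ r ∈ Finset.range x, ((1 + η / α) * (1 - α ^ K) ^ ((1:ℝ)/K)) ^ r := hsum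
          _ ≤ ((1 + η / α) / (1 - α ^ K)) *
              (1 / (1 - (1 + η / α) * (1 - α ^ K) ^ ((1:ℝ)/K))) := by
              refine mul_le_mul_of_nonneg_left hgeom ?_
              positivity
    _ ≤ (K * η) * (1 / (α * (1 - α ^ K) ^ ((1:ℝ)/K + 1) *
          (1 - (1 + η / α) * (1 - α ^ K) ^ ((1:ℝ)/K)) ^ 2)) :=
        mul_le_mul_of_nonneg_left hkey hKη
    _ = K * η / (α * (1 - α ^ K) ^ ((1:ℝ)/K + 1) *
          (1 - (1 + η / α) * (1 - α ^ K) ^ ((1:ℝ)/K)) ^ 2) := by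
        rw [mul_one_div]


lemma pathsTo_zero (μ : Fin K) : pathsTo E 0 μ = {fun _ => μ} := by
  ext w
  simp only [pathsTo, Finset.mem_filter, Finset.mem_univ, true_and, Finset.mem_singleton]
  constructor
  · rintro ⟨h1, _⟩
    funext i
    have hlt := i.isLt
    have hi : i = Fin.last 0 := by
      apply Fin.ext
      simp only [Fin.val_last]
      omega
    rw [hi, h1]
  · rintro rfl
    exact ⟨rfl, fun i => i.elim0⟩

lemma pathSum_eq_G : ∀ x s μ,
    ∑ w ∈ (pathsTo E x μ).filter (fun w => w 0 ∈ MlInf E), pathProd M s x w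
      = Gfun E M s x μ := by
  intro x
  induction x with
  | zero =>
    intro s μ
    rw [pathsTo_zero, Finset.filter_singleton]
    dsimp [Gfun]
    by_cases h : μ ∈ MlInf E
    · rw [if_pos h, if_pos h, Finset.sum_singleton]
      rfl
    · rw [if_neg h, if_neg h, Finset.sum_empty]
  | succ x ih =>
    intro s μ
    have hG : Gfun E M s (x + 1) μ = ∑ a ∈ Nin E μ,
        ∑ w' ∈ (pathsTo E x a).filter (fun w' => w' 0 ∈ MlInf E),
          M s μ a * pathProd M (s - 1) x w' := by
      dsimp [Gfun]
      refine Finset.sum_congr rfl fun a _ => ?_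
      rw [← ih (s - 1) a, Finset.mul_sum]
    rw [hG]
    refine Eq.trans ?_ (Finset.sum_sigma (s := Nin E μ)
      (t := fun a => (pathsTo E x a).filter (fun w' => w' 0 ∈ MlInf E))
      (f := fun p => M s μ p.1 * pathProd M (s - 1) x p.2))
    refine Finset.sum_nbij'
      (i := fun w => (⟨w (Fin.last x).castSucc, Fin.init w⟩ :
        (a : Fin K) × (Fin (x + 1) → Fin K)))
      (j := fun p => Fin.snoc p.2 μ) ?_ ?_ ?_ ?_ ?_
    · -- hi : maps into sigma set
      intro w hw
      simp only [pathsTo, Finset.mem_filter, Finset.mem_univ, true_and] at hw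
      obtain ⟨⟨hlast, hedge⟩, h0⟩ := hw
      have hEdge : (w (Fin.last x).castSucc, μ) ∈ E := by
        have := hedge (Fin.last x)
        rwa [Fin.succ_last, hlast] at this
      simp only [Finset.mem_sigma, pathsTo, Finset.mem_filter, Finset.mem_univ, true_and]
      refine ⟨(mem_Nin E).2 hEdge, ⟨?_, ?_⟩, ?_⟩
      · rfl
      · intro i
        have := hedge i.castSucc
        have e1 : Fin.init w i.castSucc = w i.castSucc.castSucc := rfl
        have e2 : Fin.init w i.succ = w i.succ.castSucc := rfl
        rw [e1, e2, ← Fin.succ_castSucc]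
        exact this
      · have e0 : Fin.init w 0 = w ((0 : Fin (x + 1)).castSucc) := rfl
        rw [e0, Fin.castSucc_zero]
        exact h0
    · -- hj : reverse map into path set
      rintro ⟨a, w'⟩ hp
      simp only [Finset.mem_sigma, pathsTo, Finset.mem_filter, Finset.mem_univ, true_and] at hp
      obtain ⟨haNin, ⟨hlast, hedge⟩, h0⟩ := hp
      simp only [pathsTo, Finset.mem_filter, Finset.mem_univ, true_and]
      refine ⟨⟨?_, ?_⟩, ?_⟩
      · exact Fin.snoc_last _ _
      · intro i
        refine Fin.lastCases ?_ ?_ i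
        · rw [Fin.succ_last, Fin.snoc_last, Fin.snoc_castSucc, hlast]
          exact (mem_Nin E).1 haNin
        · intro j
          rw [Fin.succ_castSucc, Fin.snoc_castSucc, Fin.snoc_castSucc]
          exact hedge j
      · have : (0 : Fin (x + 2)) = (0 : Fin (x + 1)).castSucc := by
          rw [Fin.castSucc_zero]
        rw [this, Fin.snoc_castSucc]
        exact h0
    · -- left inverse
      intro w hw
      simp only [pathsTo, Finset.mem_filter, Finset.mem_univ, true_and] at hw
      obtain ⟨⟨hlast, _⟩, _⟩ := hw
      show Fin.snoc (Fin.init w) μ = w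
      rw [← hlast]
      exact Fin.snoc_init_self w
    · -- right inverse
      rintro ⟨a, w'⟩ hp
      simp only [Finset.mem_sigma, pathsTo, Finset.mem_filter, Finset.mem_univ, true_and] at hp
      obtain ⟨haNin, ⟨hlast, hedge⟩, h0⟩ := hp
      have h1 : (Fin.snoc w' μ : Fin (x + 2) → Fin K) (Fin.last x).castSucc = a := by
        rw [Fin.snoc_castSucc, hlast]
      have h2 : Fin.init (Fin.snoc w' μ : Fin (x + 2) → Fin K) = w' := by
        simp
      simp [hlast]
    · -- values
      intro w hw
      simp only [pathsTo, Finset.mem_filter, Finset.mem_univ, true_and] at hw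
      obtain ⟨⟨hlast, _⟩, _⟩ := hw
      show pathProd M s (x + 1) w = M s μ (w (Fin.last x).castSucc) *
        pathProd M (s - 1) x (Fin.init w)
      dsimp [pathProd]
      rw [hlast]
      rfl



open Classical in
lemma triple_eq (x : ℕ) (μ : Fin K) (f : (Fin (x + 1) → Fin K) → Matrix (Fin d) (Fin d) ℝ) :
    ∑ v ∈ MlInf E, ∑ ℓ ∈ Finset.range (x + 1),
      ∑ w ∈ (pathsTo E x μ).filter (fun w =>
          w ⟨x - ℓ, Nat.lt_succ_of_le (Nat.sub_le x ℓ)⟩ = v ∧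
          ∀ j : Fin (x + 1), x - ℓ < (j : ℕ) → w j ∉ MlInf E), f w
    = ∑ w ∈ (pathsTo E x μ).filter (fun w => w 0 ∈ MlInf E), f w := by
  have key : ∀ w ∈ pathsTo E x μ,
      (∑ ℓ ∈ Finset.range (x + 1), ∑ v ∈ MlInf E,
        (if (w ⟨x - ℓ, Nat.lt_succ_of_le (Nat.sub_le x ℓ)⟩ = v ∧
            ∀ j : Fin (x + 1), x - ℓ < (j : ℕ) → w j ∉ MlInf E) then f w else 0))
      = (if w 0 ∈ MlInf E then f w else 0) := by
    intro w hw
    simp only [pathsTo, Finset.mem_filter, Finset.mem_univ, true_and] at hw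
    obtain ⟨hlast, hedge⟩ := hw
    have hinner : ∀ ℓ ∈ Finset.range (x + 1), (∑ v ∈ MlInf E,
        if (w ⟨x - ℓ, Nat.lt_succ_of_le (Nat.sub_le x ℓ)⟩ = v ∧
            ∀ j : Fin (x + 1), x - ℓ < (j : ℕ) → w j ∉ MlInf E) then f w else 0)
        = (if (w ⟨x - ℓ, Nat.lt_succ_of_le (Nat.sub_le x ℓ)⟩ ∈ MlInf E ∧
            ∀ j : Fin (x + 1), x - ℓ < (j : ℕ) → w j ∉ MlInf E) then f w else 0) := by
      intro ℓ _
      by_cases hQ : ∀ j : Fin (x + 1), x - ℓ < (j : ℕ) → w j ∉ MlInf E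
      · have e1 : ∀ v ∈ MlInf E,
            (if (w ⟨x - ℓ, Nat.lt_succ_of_le (Nat.sub_le x ℓ)⟩ = v ∧
              ∀ j : Fin (x + 1), x - ℓ < (j : ℕ) → w j ∉ MlInf E) then f w else 0)
            = (if (w ⟨x - ℓ, Nat.lt_succ_of_le (Nat.sub_le x ℓ)⟩ = v) then f w else 0) := by
          intro v _
          by_cases hvv : w ⟨x - ℓ, Nat.lt_succ_of_le (Nat.sub_le x ℓ)⟩ = v
          · rw [if_pos ⟨hvv, hQ⟩, if_pos hvv]
          · rw [if_neg (fun h => hvv h.1), if_neg hvv]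
        rw [Finset.sum_congr rfl e1,
          Finset.sum_ite_eq (MlInf E) (w ⟨x - ℓ, Nat.lt_succ_of_le (Nat.sub_le x ℓ)⟩)
            (fun _ => f w)]
        by_cases hm : w ⟨x - ℓ, Nat.lt_succ_of_le (Nat.sub_le x ℓ)⟩ ∈ MlInf E
        · rw [if_pos hm, if_pos ⟨hm, hQ⟩]
        · rw [if_neg hm, if_neg (fun h => hm h.1)]
      · rw [if_neg (fun h => hQ h.2)]
        exact Finset.sum_eq_zero fun v _ => if_neg (fun h => hQ h.2)
    rw [Finset.sum_congr rfl hinner]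
    by_cases h0 : w 0 ∈ MlInf E
    · rw [if_pos h0]
      set Pp : ℕ → Prop := fun i => ∃ h : i < x + 1, w ⟨i, h⟩ ∈ MlInf E with hPp
      set i0 := Nat.findGreatest Pp x with hi0
      have hi0le : i0 ≤ x := Nat.findGreatest_le x
      have hspec : Pp i0 := Nat.findGreatest_spec (m := 0) (Nat.zero_le x) ⟨by omega, h0⟩
      have hgr : ∀ k, i0 < k → k ≤ x → ¬ Pp k := fun k h1 h2 =>
        Nat.findGreatest_is_greatest h1 h2
      rw [Finset.sum_eq_single (x - i0)]
      · have hidx : x - (x - i0) = i0 := by omega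
        simp only [hidx]
        rw [if_pos]
        refine ⟨hspec.2, ?_⟩
        intro j hj hmem
        refine hgr (j : ℕ) hj (by omega) ⟨j.isLt, ?_⟩
        exact hmem
      · intro ℓ hℓ hne
        simp only [Finset.mem_range] at hℓ
        rw [if_neg]
        rintro ⟨hmem, hQ⟩
        rcases lt_trichotomy (x - ℓ) i0 with h1 | h1 | h1
        · exact hQ ⟨i0, by omega⟩ (by simpa using h1) hspec.2
        · exact hne (by omega)
        · exact hgr (x - ℓ) h1 (by omega) ⟨Nat.lt_succ_of_le (Nat.sub_le x ℓ), hmem⟩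
      · intro hnot
        exact absurd (Finset.mem_range.mpr (by omega)) hnot
    · rw [if_neg h0]
      refine Finset.sum_eq_zero fun ℓ hℓ => ?_
      rw [if_neg]
      rintro ⟨hmem, _⟩
      exact h0 (path_desc E hedge (x - ℓ) _ hmem)
  calc ∑ v ∈ MlInf E, ∑ ℓ ∈ Finset.range (x + 1),
      ∑ w ∈ (pathsTo E x μ).filter (fun w =>
          w ⟨x - ℓ, Nat.lt_succ_of_le (Nat.sub_le x ℓ)⟩ = v ∧
          ∀ j : Fin (x + 1), x - ℓ < (j : ℕ) → w j ∉ MlInf E), f w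
      = ∑ v ∈ MlInf E, ∑ ℓ ∈ Finset.range (x + 1), ∑ w ∈ pathsTo E x μ,
          (if (w ⟨x - ℓ, Nat.lt_succ_of_le (Nat.sub_le x ℓ)⟩ = v ∧
            ∀ j : Fin (x + 1), x - ℓ < (j : ℕ) → w j ∉ MlInf E) then f w else 0) := by
        refine Finset.sum_congr rfl fun v _ => Finset.sum_congr rfl fun ℓ _ => ?_
        rw [Finset.sum_filter]
    _ = ∑ ℓ ∈ Finset.range (x + 1), ∑ v ∈ MlInf E, ∑ w ∈ pathsTo E x μ,
          (if (w ⟨x - ℓ, Nat.lt_succ_of_le (Nat.sub_le x ℓ)⟩ = v ∧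
            ∀ j : Fin (x + 1), x - ℓ < (j : ℕ) → w j ∉ MlInf E) then f w else 0) :=
        Finset.sum_comm
    _ = ∑ ℓ ∈ Finset.range (x + 1), ∑ w ∈ pathsTo E x μ, ∑ v ∈ MlInf E,
          (if (w ⟨x - ℓ, Nat.lt_succ_of_le (Nat.sub_le x ℓ)⟩ = v ∧
            ∀ j : Fin (x + 1), x - ℓ < (j : ℕ) → w j ∉ MlInf E) then f w else 0) :=
        Finset.sum_congr rfl fun ℓ _ => Finset.sum_comm
    _ = ∑ w ∈ pathsTo E x μ, ∑ ℓ ∈ Finset.range (x + 1), ∑ v ∈ MlInf E,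
          (if (w ⟨x - ℓ, Nat.lt_succ_of_le (Nat.sub_le x ℓ)⟩ = v ∧
            ∀ j : Fin (x + 1), x - ℓ < (j : ℕ) → w j ∉ MlInf E) then f w else 0) :=
        Finset.sum_comm
    _ = ∑ w ∈ pathsTo E x μ, (if w 0 ∈ MlInf E then f w else 0) :=
        Finset.sum_congr rfl key
    _ = ∑ w ∈ (pathsTo E x μ).filter (fun w => w 0 ∈ MlInf E), f w :=
        (Finset.sum_filter _ _).symm

lemma filter_empty_Mlnc {μ : Fin K} (hμ : μ ∈ Mlnc E) {x : ℕ} (hx : 1 ≤ x)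
    {v : Fin K} (hv : v ∈ MlInf E) (ℓ : ℕ) :
    (pathsTo E x μ).filter (fun w =>
        w ⟨x - ℓ, Nat.lt_succ_of_le (Nat.sub_le x ℓ)⟩ = v ∧
        ∀ j : Fin (x + 1), x - ℓ < (j : ℕ) → w j ∉ MlInf E) = ∅ := by
  classical
  rw [Finset.eq_empty_iff_forall_notMem]
  intro w hw
  simp only [Finset.mem_filter, pathsTo, Finset.mem_univ, true_and] at hw
  obtain ⟨⟨hlast, hedge⟩, hvv, _⟩ := hw
  simp only [Mlnc, Finset.mem_sdiff] at hμ
  obtain ⟨hMl, hnc⟩ := hμ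
  apply hnc
  rcases Nat.lt_or_ge (x - ℓ) x with h1 | h1
  · have htg : Relation.TransGen (EdgeRel E) (w ⟨x - ℓ, by omega⟩) (w ⟨x, by omega⟩) :=
      path_asc E hedge x (by omega) (x - ℓ) h1
    have hμw : w ⟨x, by omega⟩ = μ := hlast
    rw [hμw, hvv] at htg
    simp only [Mlc, Finset.mem_filter]
    exact ⟨hMl, Or.inr ⟨v, hv, htg⟩⟩
  · have hxx : x - ℓ = x := by omega
    have : v = μ := by
      rw [← hvv, ← hlast]
      congr 1
      exact Fin.ext (by simp [hxx])
    rw [← this]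
    exact MlInf_subset_Mlc E hv

end S17
end

open scoped Matrix.Norms.L2Operator in
theorem stmt17'
    {K : ℕ} (hK : 1 ≤ K)
    (E : Finset (Fin K × Fin K))
    (α : ℝ) (hα0 : 0 < α) (hα1 : α < 1)
    (P : ℕ → Matrix (Fin K) (Fin K) ℝ)
    (hPnn : ∀ t, 1 ≤ t → ∀ μ ν : Fin K, 0 ≤ P t μ ν)
    (hProw : ∀ t, 1 ≤ t → ∀ μ ∈ Ml E, ∑ ν ∈ Nin E μ, P t μ ν = 1)
    (hPα : ∀ t, 1 ≤ t → ∀ ν μ : Fin K, (ν, μ) ∈ E → α ≤ P t μ ν)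
    {d : ℕ} (hd : 1 ≤ d) (η : ℝ) (hη : 0 ≤ η)
    (M : ℕ → Fin K → Fin K → Matrix (Fin d) (Fin d) ℝ)
    (hMrow : ∀ t, 1 ≤ t → ∀ μ ∈ Ml E, ∑ ν ∈ Nin E μ, M t μ ν = 1)
    (hM : ∀ t, 1 ≤ t → ∀ ν μ : Fin K, (ν, μ) ∈ E →
      ‖M t μ ν - P t μ ν • (1 : Matrix (Fin d) (Fin d) ℝ)‖ ≤ η)
    (hc₁1 : (1 + η / α) * (1 - α ^ K) ^ ((1 : ℝ) / K) < 1) :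
    (∀ μ ∈ Mlc E, ∀ t : ℕ, K ≤ t →
      (t : ℝ) * (α ^ K - K * η / (α * (1 - α ^ K) ^ ((1 : ℝ) / K + 1) *
            (1 - (1 + η / α) * (1 - α ^ K) ^ ((1 : ℝ) / K)) ^ 2)) -
          α ^ K * (K - 1) ≤
        ‖(∑ x ∈ Finset.Icc 1 t, ∑ v ∈ MlInf E, ∑ ℓ ∈ Finset.range (x + 1),
          ∑ w ∈ (pathsTo E x μ).filter (fun w =>
              w ⟨x - ℓ, Nat.lt_succ_of_le (Nat.sub_le x ℓ)⟩ = v ∧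
              ∀ j : Fin (x + 1), x - ℓ < (j : ℕ) → w j ∉ MlInf E),
            pathProd M t x w)‖) ∧
    (∀ μ ∈ Mlnc E, ∀ t : ℕ, K ≤ t →
      ∑ x ∈ Finset.Icc 1 t, ∑ v ∈ MlInf E, ∑ ℓ ∈ Finset.range (x + 1),
          ∑ w ∈ (pathsTo E x μ).filter (fun w =>
              w ⟨x - ℓ, Nat.lt_succ_of_le (Nat.sub_le x ℓ)⟩ = v ∧
              ∀ j : Fin (x + 1), x - ℓ < (j : ℕ) → w j ∉ MlInf E),
            pathProd M t x w = 0) := by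
  set C := K * η / (α * (1 - α ^ K) ^ ((1 : ℝ) / K + 1) *
      (1 - (1 + η / α) * (1 - α ^ K) ^ ((1 : ℝ) / K)) ^ 2) with hC
  constructor
  · intro μ hμ t ht
    have ht1 : 1 ≤ t := le_trans hK ht
    have hsum_eq : (∑ x ∈ Finset.Icc 1 t, ∑ v ∈ MlInf E, ∑ ℓ ∈ Finset.range (x + 1),
          ∑ w ∈ (pathsTo E x μ).filter (fun w =>
              w ⟨x - ℓ, Nat.lt_succ_of_le (Nat.sub_le x ℓ)⟩ = v ∧
              ∀ j : Fin (x + 1), x - ℓ < (j : ℕ) → w j ∉ MlInf E),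
            pathProd M t x w)
        = ∑ x ∈ Finset.Icc 1 t, S17.Gfun E M t x μ := by
      refine Finset.sum_congr rfl fun x hx => ?_
      rw [S17.triple_eq E x μ (pathProd M t x), S17.pathSum_eq_G E M x t μ]
    rw [hsum_eq]
    have hdecomp : ∑ x ∈ Finset.Icc 1 t, S17.Gfun E M t x μ
        = (∑ x ∈ Finset.Icc 1 t, S17.jfun E P t x μ) • (1 : Matrix (Fin d) (Fin d) ℝ)
          + ∑ x ∈ Finset.Icc 1 t, S17.Errf E P M t x μ := by
      rw [Finset.sum_smul, ← Finset.sum_add_distrib]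
      refine Finset.sum_congr rfl fun x _ => ?_
      rw [S17.Errf]
      abel
    set T := ∑ x ∈ Finset.Icc 1 t, S17.jfun E P t x μ with hT
    have hTnn : 0 ≤ T :=
      Finset.sum_nonneg fun x hx => S17.jfun_nonneg E P hPnn x t μ (Finset.mem_Icc.1 hx).2
    have hErrsum : ‖∑ x ∈ Finset.Icc 1 t, S17.Errf E P M t x μ‖ ≤ t * C := by
      refine (norm_sum_le _ _).trans ?_
      have h1 : ∀ x ∈ Finset.Icc 1 t, ‖S17.Errf E P M t x μ‖ ≤ C := fun x hx =>
        S17.Errf_le_C E P hα0 hα1 hPnn hProw hPα M hMrow η hη hd hM hK hc₁1 x t μ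
          (Finset.mem_Icc.1 hx).2
      refine (Finset.sum_le_sum h1).trans ?_
      rw [Finset.sum_const, nsmul_eq_mul, Nat.card_Icc]
      simp
    have hnorm1 : ‖T • (1 : Matrix (Fin d) (Fin d) ℝ)‖ = T := by
      rw [norm_smul, Real.norm_eq_abs, S17.norm_one_mat hd, abs_of_nonneg hTnn, mul_one]
    have hlow : T ≤ ‖∑ x ∈ Finset.Icc 1 t, S17.Gfun E M t x μ‖ + t * C := by
      have h2 : T • (1 : Matrix (Fin d) (Fin d) ℝ)
          = (∑ x ∈ Finset.Icc 1 t, S17.Gfun E M t x μ)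
            - ∑ x ∈ Finset.Icc 1 t, S17.Errf E P M t x μ := by
        rw [hdecomp]; abel
      calc T = ‖T • (1 : Matrix (Fin d) (Fin d) ℝ)‖ := hnorm1.symm
        _ ≤ ‖∑ x ∈ Finset.Icc 1 t, S17.Gfun E M t x μ‖
            + ‖∑ x ∈ Finset.Icc 1 t, S17.Errf E P M t x μ‖ := by
            rw [h2]; exact norm_sub_le _ _
        _ ≤ _ := by linarith
    have hTlow : ((t : ℝ) - K + 1) * α ^ K ≤ T := by
      have hsub : Finset.Icc K t ⊆ Finset.Icc 1 t := Finset.Icc_subset_Icc hK le_rfl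
      have h3 : ∑ x ∈ Finset.Icc K t, S17.jfun E P t x μ ≤ T :=
        Finset.sum_le_sum_of_subset_of_nonneg hsub fun x hx _ =>
          S17.jfun_nonneg E P hPnn x t μ (Finset.mem_Icc.1 hx).2
      have h4 : ∀ x ∈ Finset.Icc K t, α ^ K ≤ S17.jfun E P t x μ := by
        intro x hx
        rw [Finset.mem_Icc] at hx
        have hR : μ ∈ S17.Rlay E (K - 1) := S17.Mlc_subset_Rlay E hK hμ
        have h5 : α ^ (K - 1) ≤ S17.jfun E P t x μ :=
          S17.jfun_ge E P hα0 hα1 hPnn hProw hPα x t μ (K - 1) hx.2 hR (by omega)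
        have h6 : α ^ K ≤ α ^ (K - 1) :=
          pow_le_pow_of_le_one hα0.le hα1.le (by omega)
        linarith
      have h7 : ((Finset.Icc K t).card : ℝ) * α ^ K ≤ ∑ x ∈ Finset.Icc K t, S17.jfun E P t x μ := by
        have := Finset.sum_le_sum h4
        rwa [Finset.sum_const, nsmul_eq_mul] at this
      have h8 : ((Finset.Icc K t).card : ℝ) = (t : ℝ) - K + 1 := by
        rw [Nat.card_Icc]
        have : K ≤ t + 1 := by omega
        push_cast [Nat.cast_sub this]
        ring
      rw [h8] at h7
      linarith
    have e : (t : ℝ) * (α ^ K - C) - α ^ K * ((K : ℝ) - 1)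
        = ((t : ℝ) - K + 1) * α ^ K - t * C := by ring
    rw [hC] at e ⊢
    linarith [hlow, hTlow, e]
  · intro μ hμ t ht
    refine Finset.sum_eq_zero fun x hx => ?_
    rw [Finset.mem_Icc] at hx
    refine Finset.sum_eq_zero fun v hv => ?_
    refine Finset.sum_eq_zero fun ℓ hℓ => ?_
    rw [S17.filter_empty_Mlnc E hμ hx.1 hv ℓ, Finset.sum_empty]


/-- Let `M_{t,μ,ν}` be `d×d` matrices with `∑_{ν∈Nin(μ)} M_{t,μ,ν} = I_d` for
every `μ ∈ M_l` and `‖M_{t,μ,ν} − P_{t,μ,ν}·I_d‖_op ≤ η` on edges. With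
`c₁ = (1 + η/α)(1 − α^K)^{1/K} ∈ (0,1)` and
`c₂ = α^K − K·η/(α(1 − α^K)^{1/K+1}(1 − c₁)²)`, for every `μ ∈ M_l^c` and `t ≥ K` the
operator norm of the sum over `x = 1..t`, `v ∈ M_l^∞`, `0 ≤ ℓ ≤ x` and paths in `L_{x,ℓ,v}(μ)`
of the matrix products along the paths is at least `t·c₂ − α^K·(K−1)`; moreover for every
`μ ∈ M_l^nc` the corresponding sum is the zero matrix. -/
theorem stmt17
    {K : ℕ} (hK : 1 ≤ K)
    (E : Finset (Fin K × Fin K))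
    (α : ℝ) (hα0 : 0 < α) (hα1 : α < 1)
    (P : ℕ → Matrix (Fin K) (Fin K) ℝ)
    (hPzero : ∀ t, 1 ≤ t → ∀ μ ν : Fin K,
      ¬ ((μ ∈ Ml E ∧ ν ∈ Nin E μ) ∨ (μ = ν ∧ μ ∈ Mu E)) → P t μ ν = 0)
    (hPnn : ∀ t, 1 ≤ t → ∀ μ ν : Fin K, 0 ≤ P t μ ν)
    (hPu : ∀ t, 1 ≤ t → ∀ μ ∈ Mu E, P t μ μ = 1)
    (hProw : ∀ t, 1 ≤ t → ∀ μ ∈ Ml E, ∑ ν ∈ Nin E μ, P t μ ν = 1)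
    (hPα : ∀ t, 1 ≤ t → ∀ ν μ : Fin K, (ν, μ) ∈ E → α ≤ P t μ ν)
    {d : ℕ} (hd : 1 ≤ d) (η : ℝ) (hη : 0 ≤ η)
    (M : ℕ → Fin K → Fin K → Matrix (Fin d) (Fin d) ℝ)
    (hMrow : ∀ t, 1 ≤ t → ∀ μ ∈ Ml E, ∑ ν ∈ Nin E μ, M t μ ν = 1)
    (hM : ∀ t, 1 ≤ t → ∀ ν μ : Fin K, (ν, μ) ∈ E →
      opNorm (M t μ ν - P t μ ν • (1 : Matrix (Fin d) (Fin d) ℝ)) ≤ η)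
    (hc₁0 : 0 < (1 + η / α) * (1 - α ^ K) ^ ((1 : ℝ) / K))
    (hc₁1 : (1 + η / α) * (1 - α ^ K) ^ ((1 : ℝ) / K) < 1) :
    (∀ μ ∈ Mlc E, ∀ t : ℕ, K ≤ t →
      (t : ℝ) * (α ^ K - K * η / (α * (1 - α ^ K) ^ ((1 : ℝ) / K + 1) *
            (1 - (1 + η / α) * (1 - α ^ K) ^ ((1 : ℝ) / K)) ^ 2)) -
          α ^ K * (K - 1) ≤
        opNorm (∑ x ∈ Finset.Icc 1 t, ∑ v ∈ MlInf E, ∑ ℓ ∈ Finset.range (x + 1),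
          ∑ w ∈ (pathsTo E x μ).filter (fun w =>
              w ⟨x - ℓ, Nat.lt_succ_of_le (Nat.sub_le x ℓ)⟩ = v ∧
              ∀ j : Fin (x + 1), x - ℓ < (j : ℕ) → w j ∉ MlInf E),
            pathProd M t x w)) ∧
    (∀ μ ∈ Mlnc E, ∀ t : ℕ, K ≤ t →
      ∑ x ∈ Finset.Icc 1 t, ∑ v ∈ MlInf E, ∑ ℓ ∈ Finset.range (x + 1),
          ∑ w ∈ (pathsTo E x μ).filter (fun w =>
              w ⟨x - ℓ, Nat.lt_succ_of_le (Nat.sub_le x ℓ)⟩ = v ∧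
              ∀ j : Fin (x + 1), x - ℓ < (j : ℕ) → w j ∉ MlInf E),
            pathProd M t x w = 0) := by
  have h := stmt17' hK E α hα0 hα1 P hPnn hProw hPα hd η hη M hMrow
    (fun t ht ν μ he => le_of_eq_of_le (S17.opNorm_eq _).symm (hM t ht ν μ he)) hc₁1
  constructor
  · intro μ hμ t ht
    rw [S17.opNorm_eq]
    exact h.1 μ hμ t ht
  · exact h.2
end
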